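/- arXiv:2603.13614 — 9 statements merged into one kernel-verified Lean document; each statement's English description precedes it below -/
import Mathlib

section
/- Let C : [0,1]² → [0,1] be a bivariate copula (in particular, its survival copula C̄(u,v) := u + v − 1 + C(1−u, 1−v) satisfies 0 ≤ C̄(x,y) ≤ min(x,y) for all (x,y) ∈ [0,1]²). Suppose that for every v ∈ [0,1] the limit Λ(v,1) := lim_{s→∞} s·C̄(v/s, 1/s) exists. Then lim_{t↑1} [3 / (t²(1−t)³)] ∫_t¹ ( C(u,t) − u·t )² du = 3 ∫₀¹ Λ(v,1)² dv. -/
open Filter Set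

noncomputable section

/-- A bivariate copula: grounded, with uniform margins, and 2-increasing. -/
def IsCopula (C : ℝ → ℝ → ℝ) : Prop :=
  (∀ u ∈ Icc (0 : ℝ) 1, C u 0 = 0 ∧ C 0 u = 0 ∧ C u 1 = u ∧ C 1 u = u) ∧
  (∀ u₁ u₂ v₁ v₂ : ℝ, 0 ≤ u₁ → u₁ ≤ u₂ → u₂ ≤ 1 → 0 ≤ v₁ → v₁ ≤ v₂ → v₂ ≤ 1 →
    0 ≤ C u₂ v₂ - C u₁ v₂ - C u₂ v₁ + C u₁ v₁)

/-- Survival copula `C̄(u,v) = u + v − 1 + C(1−u,1−v)`. -/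
def survCopula (C : ℝ → ℝ → ℝ) : ℝ → ℝ → ℝ := fun u v => u + v - 1 + C (1 - u) (1 - v)

/-- Lipschitz property of a copula in the first variable. -/
lemma copula_lip {C : ℝ → ℝ → ℝ} (hC : IsCopula C) {v : ℝ} (hv : v ∈ Icc (0:ℝ) 1)
    {a b : ℝ} (ha : 0 ≤ a) (hab : a ≤ b) (hb : b ≤ 1) :
    0 ≤ C b v - C a v ∧ C b v - C a v ≤ b - a := by
  obtain ⟨hm, h2⟩ := hC
  have hma := hm a ⟨ha, hab.trans hb⟩
  have hmb := hm b ⟨ha.trans hab, hb⟩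
  constructor
  · have := h2 a b 0 v ha hab hb le_rfl hv.1 hv.2
    have h1 := hma.1
    have h3 := hmb.1
    linarith
  · have := h2 a b v 1 ha hab hb hv.1 hv.2 le_rfl
    have h1 := hma.2.2.1
    have h3 := hmb.2.2.1
    linarith

/-- The survival copula is nonnegative and bounded by each coordinate. -/
lemma survCopula_bounds {C : ℝ → ℝ → ℝ} (hC : IsCopula C) {x y : ℝ}
    (hx : x ∈ Icc (0:ℝ) 1) (hy : y ∈ Icc (0:ℝ) 1) :
    0 ≤ survCopula C x y ∧ survCopula C x y ≤ x ∧ survCopula C x y ≤ y := by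
  obtain ⟨hm, h2⟩ := hC
  have hx1 : (1:ℝ) - x ∈ Icc (0:ℝ) 1 := ⟨by linarith [hx.2], by linarith [hx.1]⟩
  have hy1 : (1:ℝ) - y ∈ Icc (0:ℝ) 1 := ⟨by linarith [hy.2], by linarith [hy.1]⟩
  have h11 := (hm 1 ⟨zero_le_one, le_rfl⟩).2.2.1
  have hxm := hm (1 - x) hx1
  have hym := hm (1 - y) hy1
  refine ⟨?_, ?_, ?_⟩
  · have := h2 (1-x) 1 (1-y) 1 hx1.1 (by linarith [hx.1]) le_rfl hy1.1
      (by linarith [hy.1]) le_rfl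
    have e1 := hxm.2.2.1
    have e2 := hym.2.2.2
    simp only [survCopula]
    linarith
  · -- survCopula C x y ≤ x  ⟺  C (1-x) (1-y) ≤ 1 - y, via monotonicity in 1st arg
    have := h2 (1-x) 1 0 (1-y) hx1.1 (by linarith [hx.1]) le_rfl le_rfl hy1.1 hy1.2
    have e1 := hxm.1
    have e2 := (hm 1 ⟨zero_le_one, le_rfl⟩).1
    have e3 := hym.2.2.2
    simp only [survCopula]
    linarith
  · -- survCopula C x y ≤ y  ⟺  C (1-x) (1-y) ≤ 1 - x, via monotonicity in 2nd arg
    have := h2 0 (1-x) (1-y) 1 le_rfl hx1.1 hx1.2 hy1.1 (by linarith [hy.1]) le_rfl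
    have e1 := hym.2.1
    have e2 := (hm 1 ⟨zero_le_one, le_rfl⟩).2.1
    have e3 := hxm.2.2.1
    simp only [survCopula]
    linarith

/-- A copula section `a ↦ C a v` is 1-Lipschitz, hence continuous, on `[0,1]`. -/
lemma copula_continuousOn {C : ℝ → ℝ → ℝ} (hC : IsCopula C) {v : ℝ}
    (hv : v ∈ Icc (0:ℝ) 1) : ContinuousOn (fun a => C a v) (Icc (0:ℝ) 1) := by
  have : LipschitzOnWith 1 (fun a => C a v) (Icc (0:ℝ) 1) := by
    rw [lipschitzOnWith_iff_dist_le_mul]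
    intro a ha b hb
    rw [Real.dist_eq, Real.dist_eq, NNReal.coe_one, one_mul]
    rcases le_total a b with h | h
    · obtain ⟨h1, h2⟩ := copula_lip ⟨hC.1, hC.2⟩ hv ha.1 h hb.2
      rw [abs_sub_comm, abs_of_nonneg h1, abs_sub_comm, abs_of_nonneg (by linarith)]
      linarith
    · obtain ⟨h1, h2⟩ := copula_lip ⟨hC.1, hC.2⟩ hv hb.1 h ha.2
      rw [abs_of_nonneg h1, abs_of_nonneg (by linarith)]
      linarith
  exact this.continuousOn

/-- **Identification of the population ETA measure.**
If `C` is a copula and the section `v ↦ Λ(v,1) = lim_{s→∞} s·C̄(v/s, 1/s)` of the upper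
tail copula exists, then the pre-limit ETA quotient
`[3/(t²(1−t)³)] ∫_t¹ (C(u,t) − ut)² du` converges, as `t ↑ 1`, to `3∫₀¹ Λ(v,1)² dv`. -/
theorem preLimitETA_tendsto (C : ℝ → ℝ → ℝ) (hC : IsCopula C) (L : ℝ → ℝ)
    (hL : ∀ v ∈ Icc (0 : ℝ) 1,
      Tendsto (fun s : ℝ => s * survCopula C (v / s) (1 / s)) atTop (nhds (L v))) :
    Tendsto
      (fun t : ℝ => 3 / (t ^ 2 * (1 - t) ^ 3) * ∫ u in t..1, (C u t - u * t) ^ 2)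
      (nhdsWithin 1 (Iio 1)) (nhds (3 * ∫ v in (0:ℝ)..1, (L v) ^ 2)) := by
  set l : Filter ℝ := nhdsWithin 1 (Iio 1) with hl
  set g : ℝ → ℝ → ℝ := fun t w => (1-t)⁻¹ * survCopula C ((1-t)*w) (1-t) - (1-t)*w
    with hg
  -- eventually t ∈ (0,1)
  have hev : ∀ᶠ t in l, t ∈ Ioo (0:ℝ) 1 := by
    have h1 : ∀ᶠ t in l, t ∈ Iio (1:ℝ) := eventually_mem_nhdsWithin
    have h2 : ∀ᶠ t in l, (0:ℝ) < t :=
      (eventually_gt_nhds (by norm_num : (0:ℝ) < 1)).filter_mono nhdsWithin_le_nhds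
    filter_upwards [h1, h2] with t ht1 ht2
    exact ⟨ht2, ht1⟩
  -- s(t) = (1-t)⁻¹ → ∞
  have hs : Tendsto (fun t : ℝ => (1-t)⁻¹) l atTop := by
    apply tendsto_inv_nhdsGT_zero.comp
    rw [tendsto_nhdsWithin_iff]
    constructor
    · have : Tendsto (fun t : ℝ => 1 - t) (nhds 1) (nhds 0) := by
        have h := Continuous.tendsto (f := fun t : ℝ => 1 - t) (by continuity) 1
        simpa using h
      exact this.mono_left nhdsWithin_le_nhds
    · filter_upwards [eventually_mem_nhdsWithin] with t (ht : t ∈ Iio (1:ℝ))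
      simp only [mem_Ioi]
      have := mem_Iio.mp ht
      linarith
  -- pointwise limit of g
  have hglim : ∀ w ∈ Icc (0:ℝ) 1, Tendsto (fun t => g t w) l (nhds (L w)) := by
    intro w hw
    have h1 : Tendsto (fun t : ℝ =>
        (1-t)⁻¹ * survCopula C (w / (1-t)⁻¹) (1 / (1-t)⁻¹)) l (nhds (L w)) :=
      (hL w hw).comp hs
    have h2 : Tendsto (fun t : ℝ => (1-t)*w) l (nhds 0) := by
      have : Tendsto (fun t : ℝ => (1-t)*w) (nhds 1) (nhds ((1-1)*w)) :=
        ((continuous_const.sub continuous_id).mul continuous_const).tendsto 1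
      simpa using this.mono_left nhdsWithin_le_nhds
    have h3 := h1.sub h2
    rw [sub_zero] at h3
    apply h3.congr'
    filter_upwards [eventually_mem_nhdsWithin] with t (ht : t ∈ Iio (1:ℝ))
    simp only [hg]
    rw [div_eq_mul_inv, one_div, inv_inv, mul_comm w]
  -- convergence of the inner integral by dominated convergence
  have hint : Tendsto (fun t => ∫ w in (0:ℝ)..1, (g t w)^2) l
      (nhds (∫ v in (0:ℝ)..1, (L v)^2)) := by
    apply intervalIntegral.tendsto_integral_filter_of_dominated_convergence
      (bound := fun _ => (1:ℝ))
    · -- measurability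
      filter_upwards [hev] with t ht
      have h1t : (0:ℝ) < 1 - t := by linarith [ht.2]
      have hcont : ContinuousOn (fun w => (g t w)^2) (Icc (0:ℝ) 1) := by
        have hCc : ContinuousOn (fun a => C a (1 - (1 - t))) (Icc (0:ℝ) 1) :=
          copula_continuousOn hC ⟨by linarith [ht.1], by linarith [ht.2]⟩
        have hmap : MapsTo (fun w : ℝ => 1 - (1-t)*w) (Icc (0:ℝ) 1) (Icc (0:ℝ) 1) := by
          intro w hw
          have hp : 0 ≤ (1-t)*w := mul_nonneg (le_of_lt h1t) hw.1
          have hq : (1-t)*w ≤ (1-t)*1 :=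
            mul_le_mul_of_nonneg_left hw.2 (le_of_lt h1t)
          rw [mul_one] at hq
          simp only [mem_Icc]
          exact ⟨by linarith [ht.1], by linarith⟩
        have hφ : ContinuousOn (fun w : ℝ => 1 - (1-t)*w) (Icc (0:ℝ) 1) :=
          (continuous_const.sub (continuous_const.mul continuous_id)).continuousOn
        have hcomp : ContinuousOn (fun w : ℝ => C (1 - (1-t)*w) (1 - (1 - t)))
            (Icc (0:ℝ) 1) := hCc.comp hφ hmap
        simp only [hg, survCopula]
        apply ContinuousOn.pow
        apply ContinuousOn.sub
        · apply ContinuousOn.mul continuousOn_const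
          exact ContinuousOn.add (by fun_prop) hcomp
        · fun_prop
      have hsub : Set.uIoc (0:ℝ) 1 ⊆ Icc 0 1 := by
        rw [Set.uIoc_of_le zero_le_one]
        exact Set.Ioc_subset_Icc_self
      exact (hcont.mono hsub).aestronglyMeasurable measurableSet_uIoc
    · -- bound
      filter_upwards [hev] with t ht
      refine MeasureTheory.ae_of_all _ fun w hw => ?_
      rw [Set.uIoc_of_le (zero_le_one)] at hw
      have hw0 : 0 ≤ w := le_of_lt hw.1
      have hw1 : w ≤ 1 := hw.2
      have h1t : (0:ℝ) < 1 - t := by linarith [ht.2]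
      have hx : (1-t)*w ∈ Icc (0:ℝ) 1 := by
        constructor
        · positivity
        · nlinarith [ht.1]
      have hy : (1:ℝ) - t ∈ Icc (0:ℝ) 1 := ⟨le_of_lt h1t, by linarith [ht.1]⟩
      obtain ⟨hb0, _, hby⟩ := survCopula_bounds hC hx hy
      have hgb : |g t w| ≤ 1 := by
        rw [abs_le]
        constructor
        · simp only [hg]
          have : 0 ≤ (1-t)⁻¹ * survCopula C ((1-t)*w) (1-t) := by positivity
          nlinarith [hx.2]
        · simp only [hg]
          have h1 : (1-t)⁻¹ * survCopula C ((1-t)*w) (1-t) ≤ (1-t)⁻¹ * (1-t) :=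
            mul_le_mul_of_nonneg_left hby (le_of_lt (inv_pos.mpr h1t))
          rw [inv_mul_cancel₀ (ne_of_gt h1t)] at h1
          nlinarith [hx.1]
      rw [Real.norm_eq_abs, abs_pow]
      nlinarith [abs_nonneg (g t w)]
    · exact intervalIntegrable_const
    · -- pointwise limit
      refine MeasureTheory.ae_of_all _ fun w hw => ?_
      rw [Set.uIoc_of_le (zero_le_one)] at hw
      exact (hglim w ⟨le_of_lt hw.1, hw.2⟩).pow 2
  -- the constant factor 3/t² → 3
  have h3t : Tendsto (fun t : ℝ => 3 / t^2) l (nhds 3) := by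
    have : Tendsto (fun t : ℝ => 3 / t^2) (nhds 1) (nhds (3 / 1^2)) := by
      apply Tendsto.div tendsto_const_nhds ((continuous_pow 2).tendsto 1)
      norm_num
    norm_num at this
    exact this.mono_left nhdsWithin_le_nhds
  have hfinal := h3t.mul hint
  apply hfinal.congr'
  -- eventual equality via change of variables u = 1 - (1-t)w
  filter_upwards [hev] with t ht
  have ht0 : (0:ℝ) < t := ht.1
  have h1t : (0:ℝ) < 1 - t := by linarith [ht.2]
  have h1t' : (1:ℝ) - t ≠ 0 := ne_of_gt h1t
  have htm1 : t - 1 ≠ 0 := by intro h; apply h1t'; linarith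
  set F : ℝ → ℝ := fun u => ((1-t)⁻¹ * (C u t - u*t))^2 with hF
  have hgF : (fun w => (g t w)^2) = fun w => F ((t-1)*w + 1) := by
    funext w
    simp only [hg, hF, survCopula]
    have harg1 : 1 - (1-t)*w = (t-1)*w + 1 := by ring
    have harg2 : 1 - (1 - t) = t := by ring
    rw [← harg1, harg2]
    congr 1
    field_simp
    ring
  have hcv : ∫ w in (0:ℝ)..1, (g t w)^2 = (1-t)⁻¹ * ∫ u in t..1, F u := by
    rw [hgF, intervalIntegral.integral_comp_mul_add F htm1 1]
    have e0 : (t-1)*0 + 1 = (1:ℝ) := by ring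
    have e1 : (t-1)*1 + 1 = t := by ring
    rw [e0, e1, intervalIntegral.integral_symm t 1, smul_eq_mul]
    field_simp
    ring
  have hFI : ∫ u in t..1, F u = (1-t)⁻¹^2 * ∫ u in t..1, (C u t - u*t)^2 := by
    have : F = fun u => (1-t)⁻¹^2 * (C u t - u*t)^2 := by
      funext u; simp only [hF]; ring
    rw [this, intervalIntegral.integral_const_mul]
  rw [hcv, hFI]
  field_simp
  try tauto
end
end

section
/- Let C* : [0,1]² → [0,1] be a copula, so that in particular |C*(u,v) − C*(u′,v′)| ≤ |u − u′| + |v − v′| for all (u,v),(u′,v′) ∈ [0,1]². Fix α, β ∈ [0,1] and define the Khoudraji-type copula C_{α,β}(u,v) := u^{1−α} v^{1−β} C*(u^α, v^β). Fix (u,v) ∈ [0,1]² and suppose the limit Λ_{C*}(αu, βv) := lim_{t→∞} t·C̄*(αu/t, βv/t) exists, where C̄*(x,y) := x + y − 1 + C*(1−x, 1−y). Then lim_{t→∞} t·C̄_{α,β}(u/t, v/t) = Λ_{C*}(αu, βv), where C̄_{α,β}(x,y) := x + y − 1 + C_{α,β}(1−x, 1−y). In other words, the upper tail copula of C_{α,β}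 satisfies Λ_{C_{α,β}}(u,v) = Λ_{C*}(αu, βv). -/
open Filter Set

noncomputable section

/-- Khoudraji-type asymmetrized copula `C_{α,β}(u,v) = u^{1−α} v^{1−β} C*(u^α, v^β)`. -/
def khoudraji (Cstar : ℝ → ℝ → ℝ) (α β : ℝ) : ℝ → ℝ → ℝ :=
  fun u v => u ^ (1 - α) * v ^ (1 - β) * Cstar (u ^ α) (v ^ β)

private lemma copula_lip_s6 {C : ℝ → ℝ → ℝ}
    (hm : ∀ u ∈ Icc (0 : ℝ) 1, C u 0 = 0 ∧ C 0 u = 0 ∧ C u 1 = u ∧ C 1 u = u)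
    (hinc : ∀ u₁ u₂ v₁ v₂ : ℝ, 0 ≤ u₁ → u₁ ≤ u₂ → u₂ ≤ 1 → 0 ≤ v₁ → v₁ ≤ v₂ → v₂ ≤ 1 →
      0 ≤ C u₂ v₂ - C u₁ v₂ - C u₂ v₁ + C u₁ v₁) :
    ∀ a b a' b', a ∈ Icc (0:ℝ) 1 → b ∈ Icc (0:ℝ) 1 → a' ∈ Icc (0:ℝ) 1 → b' ∈ Icc (0:ℝ) 1 →
      |C a b - C a' b'| ≤ |a - a'| + |b - b'| := by
  have lip1 : ∀ a a' b, a ∈ Icc (0:ℝ) 1 → a' ∈ Icc (0:ℝ) 1 → b ∈ Icc (0:ℝ) 1 →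
      |C a b - C a' b| ≤ |a - a'| := by
    have step : ∀ a a' b, a ∈ Icc (0:ℝ) 1 → a' ∈ Icc (0:ℝ) 1 → b ∈ Icc (0:ℝ) 1 → a ≤ a' →
        0 ≤ C a' b - C a b ∧ C a' b - C a b ≤ a' - a := by
      intro a a' b ha ha' hb hle
      have h1 := hinc a a' 0 b ha.1 hle ha'.2 le_rfl hb.1 hb.2
      have h2 := hinc a a' b 1 ha.1 hle ha'.2 hb.1 hb.2 le_rfl
      have e1 := (hm a ha).1
      have e2 := (hm a' ha').1
      have e3 := (hm a ha).2.2.1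
      have e4 := (hm a' ha').2.2.1
      constructor <;> nlinarith
    intro a a' b ha ha' hb
    rcases le_total a a' with h | h
    · obtain ⟨s1, s2⟩ := step a a' b ha ha' hb h
      rw [abs_sub_comm (C a b), abs_of_nonneg s1, abs_sub_comm a, abs_of_nonneg (by linarith)]
      linarith
    · obtain ⟨s1, s2⟩ := step a' a b ha' ha hb h
      rw [abs_of_nonneg s1, abs_of_nonneg (by linarith)]
      linarith
  have lip2 : ∀ a b b', a ∈ Icc (0:ℝ) 1 → b ∈ Icc (0:ℝ) 1 → b' ∈ Icc (0:ℝ) 1 →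
      |C a b - C a b'| ≤ |b - b'| := by
    have step : ∀ a b b', a ∈ Icc (0:ℝ) 1 → b ∈ Icc (0:ℝ) 1 → b' ∈ Icc (0:ℝ) 1 → b ≤ b' →
        0 ≤ C a b' - C a b ∧ C a b' - C a b ≤ b' - b := by
      intro a b b' ha hb hb' hle
      have h1 := hinc 0 a b b' le_rfl ha.1 ha.2 hb.1 hle hb'.2
      have h2 := hinc a 1 b b' ha.1 ha.2 le_rfl hb.1 hle hb'.2
      have e1 := (hm b hb).2.1
      have e2 := (hm b' hb').2.1
      have e3 := (hm b hb).2.2.2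
      have e4 := (hm b' hb').2.2.2
      constructor <;> nlinarith
    intro a b b' ha hb hb'
    rcases le_total b b' with h | h
    · obtain ⟨s1, s2⟩ := step a b b' ha hb hb' h
      rw [abs_sub_comm (C a b), abs_of_nonneg s1, abs_sub_comm b, abs_of_nonneg (by linarith)]
      linarith
    · obtain ⟨s1, s2⟩ := step a b' b ha hb' hb h
      rw [abs_of_nonneg s1, abs_of_nonneg (by linarith)]
      linarith
  intro a b a' b' ha hb ha' hb'
  calc |C a b - C a' b'| ≤ |C a b - C a' b| + |C a' b - C a' b'| := abs_sub_le _ _ _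
    _ ≤ |a - a'| + |b - b'| := add_le_add (lip1 a a' b ha ha' hb) (lip2 a' b b' ha' hb hb')

private lemma key1 (c w : ℝ) (hw : 0 ≤ w) :
    Tendsto (fun t : ℝ => t * ((1 - w / t) ^ c - 1)) atTop (nhds (-(c * w))) := by
  rcases eq_or_lt_of_le hw with h0 | hw
  · simp only [← h0, zero_div, sub_zero, Real.one_rpow, sub_self, mul_zero]
    simpa using tendsto_const_nhds (x := (0:ℝ)) (f := atTop)
  · have hg : HasDerivAt (fun s : ℝ => (1 - s) ^ c) (-c) 0 := by
      have h1 : HasDerivAt (fun s : ℝ => 1 - s) (0 - 1) 0 :=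
        (hasDerivAt_const 0 (1:ℝ)).sub (hasDerivAt_id 0)
      have h2 : HasDerivAt (fun x : ℝ => x ^ c) (c * (1:ℝ) ^ (c - 1)) (1 - 0) := by
        simpa using Real.hasDerivAt_rpow_const (p := c) (x := 1) (Or.inl one_ne_zero)
      have := h2.comp 0 h1
      simpa [Real.one_rpow, Function.comp_def] using this
    have hslope := hasDerivAt_iff_tendsto_slope.mp hg
    have hs : Tendsto (fun t : ℝ => w / t) atTop (nhdsWithin (0:ℝ) {(0:ℝ)}ᶜ) := by
      rw [tendsto_nhdsWithin_iff]
      constructor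
      · exact tendsto_const_nhds.div_atTop tendsto_id
      · filter_upwards [eventually_gt_atTop (0:ℝ)] with t ht
        exact (div_pos hw ht).ne'
    have h3 := (hslope.comp hs).const_mul w
    have hlim : -(c * w) = w * (-c) := by ring
    rw [hlim]
    apply Tendsto.congr' _ h3
    filter_upwards [eventually_gt_atTop (0:ℝ)] with t ht
    have hwt : w / t ≠ 0 := (div_pos hw ht).ne'
    have ht' : t ≠ 0 := ht.ne'
    have hw' : w ≠ 0 := hw.ne'
    simp only [Function.comp, slope_def_field, sub_zero, Real.one_rpow]
    field_simp

private lemma key2 (c w : ℝ) (hw : 0 ≤ w) :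
    Tendsto (fun t : ℝ => t * ((1 - w / t) ^ c - (1 - c * w / t))) atTop (nhds 0) := by
  have h := (key1 c w hw).add (tendsto_const_nhds (x := c * w) (f := atTop))
  have hlim : (0:ℝ) = -(c * w) + c * w := by ring
  rw [hlim]
  apply Tendsto.congr' _ h
  filter_upwards [eventually_gt_atTop (0:ℝ)] with t ht
  have ht' : t ≠ 0 := ht.ne'
  field_simp
  ring

/-- **Tail copula of a Khoudraji-type asymmetrized copula.**
If `C*` is a copula, `α, β ∈ [0,1]`, `(u,v) ∈ [0,1]²`, and the limit
`Λ_{C*}(αu, βv) = lim_{t→∞} t·C̄*(αu/t, βv/t)` exists, then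
`lim_{t→∞} t·C̄_{α,β}(u/t, v/t) = Λ_{C*}(αu, βv)`. -/
theorem khoudraji_tailCopula (Cstar : ℝ → ℝ → ℝ) (hC : IsCopula Cstar)
    (α β : ℝ) (hα : α ∈ Icc (0 : ℝ) 1) (hβ : β ∈ Icc (0 : ℝ) 1)
    (u v : ℝ) (hu : u ∈ Icc (0 : ℝ) 1) (hv : v ∈ Icc (0 : ℝ) 1) (Lval : ℝ)
    (hL : Tendsto (fun t : ℝ => t * survCopula Cstar (α * u / t) (β * v / t))
      atTop (nhds Lval)) :
    Tendsto (fun t : ℝ => t * survCopula (khoudraji Cstar α β) (u / t) (v / t))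
      atTop (nhds Lval) := by
  obtain ⟨hm, hinc⟩ := hC
  have lip := copula_lip_s6 hm hinc
  set Q : ℝ → ℝ := fun t => Cstar ((1 - u / t) ^ α) ((1 - v / t) ^ β) with hQdef
  set R : ℝ → ℝ := fun t => Cstar (1 - α * u / t) (1 - β * v / t) with hRdef
  -- memberships for t ≥ 2
  have hmem : ∀ t : ℝ, 2 ≤ t →
      (1 - u / t) ^ α ∈ Icc (0:ℝ) 1 ∧ (1 - v / t) ^ β ∈ Icc (0:ℝ) 1 ∧
      (1 - α * u / t) ∈ Icc (0:ℝ) 1 ∧ (1 - β * v / t) ∈ Icc (0:ℝ) 1 := by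
    intro t ht
    have ht0 : (0:ℝ) < t := by linarith
    have hut : u / t ≤ 1 := by rw [div_le_one ht0]; linarith [hu.2]
    have hvt : v / t ≤ 1 := by rw [div_le_one ht0]; linarith [hv.2]
    have hut0 : 0 ≤ u / t := div_nonneg hu.1 ht0.le
    have hvt0 : 0 ≤ v / t := div_nonneg hv.1 ht0.le
    have haut : α * u / t ≤ 1 := by
      rw [div_le_one ht0]; nlinarith [hα.1, hα.2, hu.1, hu.2]
    have hbvt : β * v / t ≤ 1 := by
      rw [div_le_one ht0]; nlinarith [hβ.1, hβ.2, hv.1, hv.2]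
    have haut0 : 0 ≤ α * u / t := div_nonneg (mul_nonneg hα.1 hu.1) ht0.le
    have hbvt0 : 0 ≤ β * v / t := div_nonneg (mul_nonneg hβ.1 hv.1) ht0.le
    refine ⟨⟨Real.rpow_nonneg (by linarith) _,
        Real.rpow_le_one (by linarith) (by linarith) hα.1⟩,
      ⟨Real.rpow_nonneg (by linarith) _,
        Real.rpow_le_one (by linarith) (by linarith) hβ.1⟩,
      ⟨by linarith, by linarith⟩, ⟨by linarith, by linarith⟩⟩
  have h11 : Cstar 1 1 = 1 := (hm 1 ⟨zero_le_one, le_rfl⟩).2.2.1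
  -- Q tends to 1
  have hxα : Tendsto (fun t : ℝ => (1 - u / t) ^ α) atTop (nhds 1) := by
    have h1 : Tendsto (fun t : ℝ => 1 - u / t) atTop (nhds 1) := by
      have := (tendsto_const_nhds (x := u) (f := (atTop : Filter ℝ))).div_atTop tendsto_id
      simpa using (tendsto_const_nhds (x := (1:ℝ))).sub this
    simpa [Real.one_rpow] using h1.rpow_const (Or.inl one_ne_zero)
  have hyβ : Tendsto (fun t : ℝ => (1 - v / t) ^ β) atTop (nhds 1) := by
    have h1 : Tendsto (fun t : ℝ => 1 - v / t) atTop (nhds 1) := by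
      have := (tendsto_const_nhds (x := v) (f := (atTop : Filter ℝ))).div_atTop tendsto_id
      simpa using (tendsto_const_nhds (x := (1:ℝ))).sub this
    simpa [Real.one_rpow] using h1.rpow_const (Or.inl one_ne_zero)
  have hQ : Tendsto Q atTop (nhds 1) := by
    have hb : Tendsto (fun t : ℝ => |(1 - u / t) ^ α - 1| + |(1 - v / t) ^ β - 1|)
        atTop (nhds 0) := by
      have h1 := (hxα.sub (tendsto_const_nhds (x := (1:ℝ)))).abs
      have h2 := (hyβ.sub (tendsto_const_nhds (x := (1:ℝ)))).abs
      simpa using h1.add h2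
    have hsq : Tendsto (fun t => Q t - 1) atTop (nhds 0) := by
      apply squeeze_zero_norm' _ hb
      filter_upwards [eventually_ge_atTop (2:ℝ)] with t ht
      obtain ⟨m1, m2, m3, m4⟩ := hmem t ht
      have := lip ((1 - u / t) ^ α) ((1 - v / t) ^ β) 1 1 m1 m2
        ⟨zero_le_one, le_rfl⟩ ⟨zero_le_one, le_rfl⟩
      rw [h11] at this
      simpa [Real.norm_eq_abs] using this
    have := hsq.add (tendsto_const_nhds (x := (1:ℝ)))
    simpa using this
  -- A : t*(P-1)*Q
  have hg2 : Tendsto (fun t : ℝ => (1 - v / t) ^ (1 - β)) atTop (nhds 1) := by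
    have h1 : Tendsto (fun t : ℝ => 1 - v / t) atTop (nhds 1) := by
      have := (tendsto_const_nhds (x := v) (f := (atTop : Filter ℝ))).div_atTop tendsto_id
      simpa using (tendsto_const_nhds (x := (1:ℝ))).sub this
    simpa [Real.one_rpow] using h1.rpow_const (Or.inl one_ne_zero)
  have hP : Tendsto (fun t : ℝ =>
      t * ((1 - u / t) ^ (1 - α) * (1 - v / t) ^ (1 - β) - 1)) atTop
      (nhds (-((1 - α) * u) * 1 + -((1 - β) * v))) := by
    have h := ((key1 (1 - α) u hu.1).mul hg2).add (key1 (1 - β) v hv.1)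
    apply Tendsto.congr _ h
    intro t
    ring
  have hA : Tendsto (fun t : ℝ =>
      t * ((1 - u / t) ^ (1 - α) * (1 - v / t) ^ (1 - β) - 1) * Q t) atTop
      (nhds ((-((1 - α) * u) * 1 + -((1 - β) * v)) * 1)) := hP.mul hQ
  -- B : t*(Q-R) → 0
  have hB : Tendsto (fun t : ℝ => t * (Q t - R t)) atTop (nhds 0) := by
    have hb : Tendsto (fun t : ℝ =>
        |t * ((1 - u / t) ^ α - (1 - α * u / t))| +
        |t * ((1 - v / t) ^ β - (1 - β * v / t))|) atTop (nhds 0) := by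
      have h1 := (key2 α u hu.1).abs
      have h2 := (key2 β v hv.1).abs
      simpa using h1.add h2
    apply squeeze_zero_norm' _ hb
    filter_upwards [eventually_ge_atTop (2:ℝ)] with t ht
    have ht0 : (0:ℝ) < t := by linarith
    obtain ⟨m1, m2, m3, m4⟩ := hmem t ht
    have hlip := lip ((1 - u / t) ^ α) ((1 - v / t) ^ β)
      (1 - α * u / t) (1 - β * v / t) m1 m2 m3 m4
    have : ‖t * (Q t - R t)‖ = t * |Q t - R t| := by
      rw [Real.norm_eq_abs, abs_mul, abs_of_pos ht0]
    rw [this, abs_mul, abs_mul, abs_of_pos ht0, ← mul_add]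
    exact mul_le_mul_of_nonneg_left hlip ht0.le
  -- assemble
  have hbig : Tendsto (fun t : ℝ =>
      t * survCopula Cstar (α * u / t) (β * v / t) + ((1 - α) * u + (1 - β) * v)
      + t * ((1 - u / t) ^ (1 - α) * (1 - v / t) ^ (1 - β) - 1) * Q t
      + t * (Q t - R t)) atTop (nhds Lval) := by
    have h := ((hL.add (tendsto_const_nhds (x := (1 - α) * u + (1 - β) * v))).add hA).add hB
    convert h using 2
    ring
  apply Tendsto.congr' _ hbig
  filter_upwards [eventually_gt_atTop (0:ℝ)] with t ht
  have ht' : t ≠ 0 := ht.ne'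
  simp only [survCopula, khoudraji, hQdef, hRdef]
  field_simp
  ring
end
end

section
/- Let k ≥ 1 be an integer and let ρ_1, …, ρ_{k−1} be positive integers. Then (3/k²) ∫₀¹ ( Σ_{i=1}^{k−1} 1(ρ_i < k·u + 1) )² du = (3/k³) Σ_{i=1}^{k−1} Σ_{j=1}^{k−1} ( k + 1 − max(ρ_i, ρ_j) )₊. In particular, the sample Extreme Tail Association coefficient η_{k,n}(X|Y) equals 3∫₀¹ Λ̂_{k,n}(u,1)² du, where Λ̂_{k,n}(u,1) = (1/k) Σ_{i=1}^{k−1} 1(ρ_i < ku + 1) is the empirical tail copula evaluated at (u,1). -/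
open Set MeasureTheory

noncomputable section

lemma eta_indicator_integrable (c : ℝ) :
    IntervalIntegrable (fun u => if c < u then (1:ℝ) else 0) MeasureTheory.volume 0 1 := by
  rw [intervalIntegrable_iff_integrableOn_Ioc_of_le (by norm_num)]
  have : (fun u => if c < u then (1:ℝ) else 0) = Set.indicator (Ioi c) (fun _ => (1:ℝ)) := by
    funext u; simp [Set.indicator, Set.mem_Ioi]
  rw [this]
  exact ((integrableOn_const measure_Ioc_lt_top.ne).indicator measurableSet_Ioi)

lemma eta_indicator_integral (c : ℝ) (hc : 0 ≤ c) :
    ∫ u in (0:ℝ)..1, (if c < u then (1:ℝ) else 0) = max (1 - c) 0 := by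
  have h01 : (0:ℝ) ≤ 1 := by norm_num
  rw [intervalIntegral.integral_of_le h01]
  have : (fun u => if c < u then (1:ℝ) else 0) = Set.indicator (Ioi c) (fun _ => (1:ℝ)) := by
    funext u; simp [Set.indicator, Set.mem_Ioi]
  rw [this, MeasureTheory.setIntegral_indicator measurableSet_Ioi]
  rw [Set.Ioc_inter_Ioi, MeasureTheory.setIntegral_const, smul_eq_mul, mul_one,
    measureReal_def, Real.volume_Ioc, max_eq_right hc]
  rcases le_or_gt c 1 with h | h
  · rw [ENNReal.toReal_ofReal (by linarith)]; exact (max_eq_left (by linarith)).symm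
  · rw [show ENNReal.ofReal (1 - c) = 0 by simp [ENNReal.ofReal_eq_zero]; linarith]
    simp
    linarith

lemma eta_double_sum_integral (s : Finset ℕ) (f : ℕ → ℕ → ℝ → ℝ)
    (hf : ∀ i ∈ s, ∀ j ∈ s, IntervalIntegrable (f i j) MeasureTheory.volume 0 1) :
    (∫ u in (0:ℝ)..1, ∑ i ∈ s, ∑ j ∈ s, f i j u)
      = ∑ i ∈ s, ∑ j ∈ s, ∫ u in (0:ℝ)..1, f i j u := by
  rw [intervalIntegral.integral_finset_sum (f := fun i u => ∑ j ∈ s, f i j u)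
    fun i hi => by
      simpa [Finset.sum_fn] using IntervalIntegrable.sum s fun j hj => hf i hi j hj]
  exact Finset.sum_congr rfl fun i hi =>
    intervalIntegral.integral_finset_sum fun j hj => hf i hi j hj

set_option maxHeartbeats 1000000 in
/-- **Integral representation of the sample ETA coefficient.**
For an integer `k ≥ 1` and positive integers `ρ_1, …, ρ_{k−1}`,
`(3/k²) ∫₀¹ (Σ_{i=1}^{k−1} 1(ρ_i < ku + 1))² du
  = (3/k³) Σ_{i=1}^{k−1} Σ_{j=1}^{k−1} (k + 1 − max(ρ_i, ρ_j))₊`,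
i.e. `η_{k,n}(X|Y) = 3∫₀¹ Λ̂_{k,n}(u,1)² du`. -/
theorem sampleETA_integral_repr (k : ℕ) (hk : 1 ≤ k) (ρ : ℕ → ℕ)
    (hρ : ∀ i ∈ Finset.Icc 1 (k - 1), 1 ≤ ρ i) :
    3 / (k : ℝ) ^ 2 *
        ∫ u in (0:ℝ)..1,
          (∑ i ∈ Finset.Icc 1 (k - 1), if (ρ i : ℝ) < k * u + 1 then (1 : ℝ) else 0) ^ 2 =
      3 / (k : ℝ) ^ 3 *
        ∑ i ∈ Finset.Icc 1 (k - 1), ∑ j ∈ Finset.Icc 1 (k - 1),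
          max ((k : ℝ) + 1 - max (ρ i : ℝ) (ρ j : ℝ)) 0 := by
  have hk0 : (0:ℝ) < k := by exact_mod_cast hk
  have hkne : (k:ℝ) ≠ 0 := ne_of_gt hk0
  set s := Finset.Icc 1 (k - 1)
  -- pointwise rewrite of the square as a double sum of indicators
  have hpt : ∀ u : ℝ,
      (∑ i ∈ s, if (ρ i : ℝ) < k * u + 1 then (1:ℝ) else 0) ^ 2
        = ∑ i ∈ s, ∑ j ∈ s,
            (if (max (ρ i : ℝ) (ρ j : ℝ) - 1) / k < u then (1:ℝ) else 0) := by
    intro u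
    rw [sq, Finset.sum_mul_sum]
    refine Finset.sum_congr rfl fun i _ => Finset.sum_congr rfl fun j _ => ?_
    have hiff : (max (ρ i : ℝ) (ρ j : ℝ) - 1) / k < u ↔
        ((ρ i : ℝ) < k * u + 1 ∧ (ρ j : ℝ) < k * u + 1) := by
      rw [div_lt_iff₀ hk0, sub_lt_iff_lt_add, max_lt_iff]
      constructor
      · rintro ⟨h1, h2⟩; constructor <;> nlinarith
      · rintro ⟨h1, h2⟩; constructor <;> nlinarith
    by_cases h1 : (ρ i : ℝ) < k * u + 1 <;> by_cases h2 : (ρ j : ℝ) < k * u + 1 <;>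
      simp [h1, h2, hiff]
  -- each summand is interval integrable
  have hint : ∀ i ∈ s, ∀ j ∈ s, IntervalIntegrable
      (fun u => if (max (ρ i : ℝ) (ρ j : ℝ) - 1) / k < u then (1:ℝ) else 0)
      MeasureTheory.volume 0 1 := fun i _ j _ => eta_indicator_integrable _
  calc 3 / (k : ℝ) ^ 2 *
        ∫ u in (0:ℝ)..1,
          (∑ i ∈ s, if (ρ i : ℝ) < k * u + 1 then (1:ℝ) else 0) ^ 2
      = 3 / (k : ℝ) ^ 2 *
        ∫ u in (0:ℝ)..1, ∑ i ∈ s, ∑ j ∈ s,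
            (if (max (ρ i : ℝ) (ρ j : ℝ) - 1) / k < u then (1:ℝ) else 0) := by
        congr 1; exact intervalIntegral.integral_congr fun u _ => hpt u
    _ = 3 / (k : ℝ) ^ 2 * ∑ i ∈ s, ∑ j ∈ s,
          ∫ u in (0:ℝ)..1, (if (max (ρ i : ℝ) (ρ j : ℝ) - 1) / k < u then (1:ℝ) else 0) := by
        congr 1
        exact eta_double_sum_integral s
          (fun i j u => if (max (ρ i : ℝ) (ρ j : ℝ) - 1) / k < u then (1:ℝ) else 0) hint
    _ = 3 / (k : ℝ) ^ 2 * ∑ i ∈ s, ∑ j ∈ s,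
          max ((k : ℝ) + 1 - max (ρ i : ℝ) (ρ j : ℝ)) 0 / k := by
        congr 1
        refine Finset.sum_congr rfl fun i hi => Finset.sum_congr rfl fun j hj => ?_
        have h1 : (1:ℝ) ≤ ρ i := by exact_mod_cast hρ i hi
        have h2 : (1:ℝ) ≤ ρ j := by exact_mod_cast hρ j hj
        have hm : (1:ℝ) ≤ max (ρ i : ℝ) (ρ j : ℝ) := le_max_of_le_left h1
        rw [eta_indicator_integral _ (div_nonneg (by linarith) hk0.le)]
        rw [show (1:ℝ) - (max (ρ i : ℝ) (ρ j : ℝ) - 1) / k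
            = ((k : ℝ) + 1 - max (ρ i : ℝ) (ρ j : ℝ)) / k by field_simp; ring]
        rw [show (0:ℝ) = 0 / k by simp, max_div_div_right (le_of_lt hk0)]
        simp
    _ = 3 / (k : ℝ) ^ 3 * ∑ i ∈ s, ∑ j ∈ s,
          max ((k : ℝ) + 1 - max (ρ i : ℝ) (ρ j : ℝ)) 0 := by
        simp_rw [← Finset.sum_div]
        ring
end
end

section
/- Let k ≥ 1 be an integer. Then (3/k³) Σ_{i=1}^{k−1} Σ_{j=1}^{k−1} ( k + 1 − max(i,j) ) = (1 − 1/k)(1 + 5/(2k) − 3/k²). Moreover, for any injective map ρ from {1,…,k−1} to the positive integers, (3/k³) Σ_{i=1}^{k−1} Σ_{j=1}^{k−1} ( k + 1 − max(ρ_i, ρ_j) )₊ ≤ (1 − 1/k)(1 + 5/(2k) − 3/k²); i.e., the sample ETA coefficient η_{k,n}(X|Y) always lies in [0, (1 − 1/k)(1 + 5/(2k) − 3/k²)], with the maximum attained when ρ_i = i for all 1 ≤ i ≤ k−1. -/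
open Set

noncomputable section

private lemma maxSum (m : ℕ) :
    ∑ i ∈ Finset.Icc 1 m, ∑ j ∈ Finset.Icc 1 m, max (i:ℝ) (j:ℝ)
      = m*(m+1)*(4*m-1)/6 := by
  induction m with
  | zero => simp
  | succ m ih =>
    have h : 1 ≤ m + 1 := by omega
    rw [Finset.sum_Icc_succ_top h]
    have key : ∀ i : ℕ, ∑ j ∈ Finset.Icc 1 (m+1), max (i:ℝ) (j:ℝ)
        = (∑ j ∈ Finset.Icc 1 m, max (i:ℝ) (j:ℝ)) + max (i:ℝ) ((m:ℝ)+1) := by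
      intro i
      rw [Finset.sum_Icc_succ_top h]
      push_cast
      ring_nf
    simp only [key]
    rw [Finset.sum_add_distrib, ih]
    have e1 : ∀ i ∈ Finset.Icc 1 m, max (i:ℝ) ((m:ℝ)+1) = (m:ℝ)+1 := by
      intro i hi
      have : i ≤ m := (Finset.mem_Icc.mp hi).2
      have : (i:ℝ) ≤ m := by exact_mod_cast this
      rw [max_eq_right]; linarith
    have e2 : ∀ j ∈ Finset.Icc 1 m, max ((m:ℝ)+1) (j:ℝ) = (m:ℝ)+1 := by
      intro j hj
      have : j ≤ m := (Finset.mem_Icc.mp hj).2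
      have : (j:ℝ) ≤ m := by exact_mod_cast this
      rw [max_eq_left]; linarith
    push_cast
    rw [Finset.sum_congr rfl e1, Finset.sum_congr rfl e2, Finset.sum_const,
      Nat.card_Icc, max_self]
    simp only [nsmul_eq_mul]
    push_cast [Nat.add_sub_cancel]
    ring

private lemma termId (k a b : ℕ) (ha : 1 ≤ a) :
    max ((k:ℝ) + 1 - max (a:ℝ) (b:ℝ)) 0
      = ∑ s ∈ Finset.Icc 1 k,
          (if a ≤ s then (1:ℝ) else 0) * (if b ≤ s then (1:ℝ) else 0) := by
  have hcomb : ∀ s : ℕ, (if a ≤ s then (1:ℝ) else 0) * (if b ≤ s then (1:ℝ) else 0)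
      = if max a b ≤ s then (1:ℝ) else 0 := by
    intro s
    by_cases h1 : a ≤ s <;> by_cases h2 : b ≤ s <;>
      simp [h1, h2, max_le_iff]
  rw [Finset.sum_congr rfl (fun s _ => hcomb s), Finset.sum_boole]
  have hfilt : (Finset.Icc 1 k).filter (fun s => max a b ≤ s)
      = Finset.Icc (max a b) k := by
    ext s
    simp only [Finset.mem_filter, Finset.mem_Icc]
    omega
  rw [hfilt, Nat.card_Icc]
  rcases le_or_gt (max a b) k with h | h
  · have h' : (max (a:ℝ) (b:ℝ)) ≤ k := by
      rw [← Nat.cast_max]; exact_mod_cast h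
    rw [max_eq_left (by linarith)]
    push_cast [Nat.cast_sub (by omega : max a b ≤ k + 1), Nat.cast_max]
    ring
  · have h' : (k:ℝ) + 1 ≤ max (a:ℝ) (b:ℝ) := by
      rw [← Nat.cast_max]; exact_mod_cast (by omega : k + 1 ≤ max a b)
    rw [max_eq_right (by linarith)]
    have : k + 1 - max a b = 0 := by omega
    rw [this]; simp

private lemma layer (k : ℕ) (T : Finset ℕ) (hT : ∀ a ∈ T, 1 ≤ a) :
    ∑ a ∈ T, ∑ b ∈ T, max ((k:ℝ) + 1 - max (a:ℝ) (b:ℝ)) 0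
      = ∑ s ∈ Finset.Icc 1 k, ((T.filter (fun a => a ≤ s)).card : ℝ) ^ 2 := by
  rw [Finset.sum_congr rfl (fun a ha => Finset.sum_congr rfl
    (fun b hb => termId k a b (hT a ha)))]
  rw [Finset.sum_congr rfl (fun a _ => Finset.sum_comm), Finset.sum_comm]
  refine Finset.sum_congr rfl (fun s _ => ?_)
  simp only [← Finset.mul_sum]
  rw [← Finset.sum_mul, Finset.sum_boole, sq]

/-- **Range of the sample ETA coefficient.**
For an integer `k ≥ 1`:
`(3/k³) Σ_{i=1}^{k−1} Σ_{j=1}^{k−1} (k+1 − max(i,j)) = (1 − 1/k)(1 + 5/(2k) − 3/k²)`,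
and for every injective map `ρ` from `{1,…,k−1}` to the positive integers the sample ETA
coefficient `(3/k³) Σ_i Σ_j (k+1 − max(ρ_i,ρ_j))₊` lies in
`[0, (1 − 1/k)(1 + 5/(2k) − 3/k²)]`. -/
theorem sampleETA_range (k : ℕ) (hk : 1 ≤ k) :
    (3 / (k : ℝ) ^ 3 *
        ∑ i ∈ Finset.Icc 1 (k - 1), ∑ j ∈ Finset.Icc 1 (k - 1),
          ((k : ℝ) + 1 - max (i : ℝ) (j : ℝ)) =
      (1 - 1 / (k : ℝ)) * (1 + 5 / (2 * (k : ℝ)) - 3 / (k : ℝ) ^ 2)) ∧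
    ∀ ρ : ℕ → ℕ, Set.InjOn ρ ((Finset.Icc 1 (k - 1) : Finset ℕ) : Set ℕ) →
      (∀ i ∈ Finset.Icc 1 (k - 1), 1 ≤ ρ i) →
      0 ≤ 3 / (k : ℝ) ^ 3 *
          ∑ i ∈ Finset.Icc 1 (k - 1), ∑ j ∈ Finset.Icc 1 (k - 1),
            max ((k : ℝ) + 1 - max (ρ i : ℝ) (ρ j : ℝ)) 0 ∧
        3 / (k : ℝ) ^ 3 *
            ∑ i ∈ Finset.Icc 1 (k - 1), ∑ j ∈ Finset.Icc 1 (k - 1),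
              max ((k : ℝ) + 1 - max (ρ i : ℝ) (ρ j : ℝ)) 0 ≤
          (1 - 1 / (k : ℝ)) * (1 + 5 / (2 * (k : ℝ)) - 3 / (k : ℝ) ^ 2) := by
  set m := k - 1 with hm
  have hkm : (m : ℝ) = (k : ℝ) - 1 := by
    rw [hm]; push_cast [Nat.cast_sub hk]; ring
  have hkpos : (0:ℝ) < (k:ℝ) := by exact_mod_cast hk
  -- Part 1
  have part1 : 3 / (k : ℝ) ^ 3 *
        ∑ i ∈ Finset.Icc 1 m, ∑ j ∈ Finset.Icc 1 m,
          ((k : ℝ) + 1 - max (i : ℝ) (j : ℝ)) =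
      (1 - 1 / (k : ℝ)) * (1 + 5 / (2 * (k : ℝ)) - 3 / (k : ℝ) ^ 2) := by
    have split : ∑ i ∈ Finset.Icc 1 m, ∑ j ∈ Finset.Icc 1 m,
        ((k : ℝ) + 1 - max (i : ℝ) (j : ℝ))
        = (m : ℝ) * m * ((k:ℝ)+1) - (m:ℝ)*(m+1)*(4*m-1)/6 := by
      rw [Finset.sum_congr rfl (fun i _ => Finset.sum_sub_distrib _ _),
        Finset.sum_sub_distrib, maxSum m]
      simp [Nat.card_Icc, mul_comm]
      ring
    rw [split, hkm]
    field_simp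
    ring
  refine ⟨part1, fun ρ hinj hpos => ?_⟩
  constructor
  · apply mul_nonneg (by positivity)
    exact Finset.sum_nonneg fun i _ => Finset.sum_nonneg fun j _ => le_max_right _ _
  · -- rewrite the ρ-sum as a sum over the image
    set S : Finset ℕ := (Finset.Icc 1 m).image ρ with hS
    have hinj' : ∀ x ∈ Finset.Icc 1 m, ∀ y ∈ Finset.Icc 1 m, ρ x = ρ y → x = y :=
      fun x hx y hy h => hinj (Finset.mem_coe.mpr hx) (Finset.mem_coe.mpr hy) h
    have himg : ∑ i ∈ Finset.Icc 1 m, ∑ j ∈ Finset.Icc 1 m,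
        max ((k : ℝ) + 1 - max (ρ i : ℝ) (ρ j : ℝ)) 0
        = ∑ a ∈ S, ∑ b ∈ S, max ((k : ℝ) + 1 - max (a : ℝ) (b : ℝ)) 0 := by
      rw [hS, Finset.sum_image hinj']
      exact Finset.sum_congr rfl fun i _ =>
        (Finset.sum_image (f := fun b : ℕ => max ((k:ℝ) + 1 - max (ρ i : ℝ) (b : ℝ)) 0)
          hinj').symm
    have hSpos : ∀ a ∈ S, 1 ≤ a := by
      intro a ha
      obtain ⟨i, hi, rfl⟩ := Finset.mem_image.mp ha
      exact hpos i hi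
    have hIpos : ∀ a ∈ Finset.Icc 1 m, 1 ≤ a :=
      fun a ha => (Finset.mem_Icc.mp ha).1
    have hScard : S.card = m := by
      rw [hS, Finset.card_image_of_injOn hinj, Nat.card_Icc]
      omega
    -- counting bound
    have hcount : ∀ s : ℕ, (S.filter (fun a => a ≤ s)).card
        ≤ ((Finset.Icc 1 m).filter (fun a => a ≤ s)).card := by
      intro s
      have hI : (Finset.Icc 1 m).filter (fun a => a ≤ s) = Finset.Icc 1 (min m s) := by
        ext a
        simp only [Finset.mem_filter, Finset.mem_Icc]
        omega
      rw [hI, Nat.card_Icc]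
      have h1 : (S.filter (fun a => a ≤ s)).card ≤ m := by
        rw [← hScard]; exact Finset.card_le_card (Finset.filter_subset _ _)
      have h2 : (S.filter (fun a => a ≤ s)).card ≤ s := by
        have hsub : S.filter (fun a => a ≤ s) ⊆ Finset.Icc 1 s := by
          intro a ha
          have := Finset.mem_filter.mp ha
          exact Finset.mem_Icc.mpr ⟨hSpos a this.1, this.2⟩
        simpa [Nat.card_Icc] using Finset.card_le_card hsub
      omega
    have hsumle : ∑ a ∈ S, ∑ b ∈ S, max ((k : ℝ) + 1 - max (a : ℝ) (b : ℝ)) 0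
        ≤ ∑ a ∈ Finset.Icc 1 m, ∑ b ∈ Finset.Icc 1 m,
            max ((k : ℝ) + 1 - max (a : ℝ) (b : ℝ)) 0 := by
      rw [layer k S hSpos, layer k (Finset.Icc 1 m) hIpos]
      refine Finset.sum_le_sum fun s _ => ?_
      have := hcount s
      have hc : ((S.filter (fun a => a ≤ s)).card : ℝ)
          ≤ (((Finset.Icc 1 m).filter (fun a => a ≤ s)).card : ℝ) := by
        exact_mod_cast this
      exact pow_le_pow_left₀ (by positivity) hc 2
    -- drop the positive part on the identity sum
    have hdrop : ∑ a ∈ Finset.Icc 1 m, ∑ b ∈ Finset.Icc 1 m,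
          max ((k : ℝ) + 1 - max (a : ℝ) (b : ℝ)) 0
        = ∑ a ∈ Finset.Icc 1 m, ∑ b ∈ Finset.Icc 1 m,
            ((k : ℝ) + 1 - max (a : ℝ) (b : ℝ)) := by
      refine Finset.sum_congr rfl fun a ha => Finset.sum_congr rfl fun b hb => ?_
      have hak : (a:ℝ) ≤ k := by
        have := (Finset.mem_Icc.mp ha).2
        have : a ≤ k := by omega
        exact_mod_cast this
      have hbk : (b:ℝ) ≤ k := by
        have := (Finset.mem_Icc.mp hb).2
        have : b ≤ k := by omega
        exact_mod_cast this
      rw [max_eq_left]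
      rw [sub_nonneg]
      exact le_trans (max_le hak hbk) (by linarith)
    rw [himg, ← part1]
    apply mul_le_mul_of_nonneg_left _ (by positivity)
    rw [← hdrop]
    exact hsumle
end
end

section
/- Fix θ ∈ [0,1] and let C_θ(u,v) := min( u, θv + (1−θ)(u+v−1)₊ ) for (u,v) ∈ [0,1]², with survival copula C̄_θ(x,y) := x + y − 1 + C_θ(1−x, 1−y). Then for every (u,v) ∈ [0,1]², lim_{t→∞} t·C̄_θ(u/t, v/t) = min(θu, v); consequently the tail copula of C_θ is Λ_θ(u,v) = min(θu, v), and the associated ETA measures are η(X|Y) = 3∫₀¹ Λ_θ(u,1)² du = θ², η(Y|X) = 3∫₀¹ Λ_θ(1,v)² dv = 3θ² − 2θ³, and the tail asymmetry measure is Δ(X,Y) = η(X|Y) − η(Y|X) = −2θ²(1−θ). -/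
open Filter Set

noncomputable section

/-- The asymmetric copula `C_θ(u,v) = min(u, θv + (1−θ)(u+v−1)₊)` of Nelsen's example. -/
def nelsenC (θ : ℝ) : ℝ → ℝ → ℝ :=
  fun u v => min u (θ * v + (1 - θ) * max (u + v - 1) 0)

/-- **Tail copula and ETA measures for Nelsen's asymmetric copula.**
For `θ ∈ [0,1]`: `lim_{t→∞} t·C̄_θ(u/t, v/t) = min(θu, v)` for all `(u,v) ∈ [0,1]²`, so the
tail copula is `Λ_θ(u,v) = min(θu,v)`, and the corresponding ETA measures are
`η(X|Y) = 3∫₀¹ min(θu,1)² du = θ²`, `η(Y|X) = 3∫₀¹ min(θ,v)² dv = 3θ² − 2θ³`, and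
`Δ(X,Y) = η(X|Y) − η(Y|X) = −2θ²(1−θ)`. -/
theorem nelsen_tailCopula_eta (θ : ℝ) (hθ : θ ∈ Icc (0 : ℝ) 1) :
    (∀ u ∈ Icc (0 : ℝ) 1, ∀ v ∈ Icc (0 : ℝ) 1,
      Tendsto (fun t : ℝ => t * survCopula (nelsenC θ) (u / t) (v / t)) atTop
        (nhds (min (θ * u) v))) ∧
    (3 * ∫ u in (0:ℝ)..1, (min (θ * u) 1) ^ 2 = θ ^ 2) ∧
    (3 * ∫ v in (0:ℝ)..1, (min (θ * 1) v) ^ 2 = 3 * θ ^ 2 - 2 * θ ^ 3) ∧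
    ((3 * ∫ u in (0:ℝ)..1, (min (θ * u) 1) ^ 2) -
        (3 * ∫ v in (0:ℝ)..1, (min (θ * 1) v) ^ 2) = -2 * θ ^ 2 * (1 - θ)) := by

  obtain ⟨hθ0, hθ1⟩ := hθ
  have h2 : 3 * ∫ u in (0:ℝ)..1, (min (θ * u) 1) ^ 2 = θ ^ 2 := by
    have hcong : ∀ u ∈ uIcc (0:ℝ) 1, (min (θ * u) 1) ^ 2 = θ ^ 2 * u ^ 2 := by
      intro u hu
      rw [uIcc_of_le (by norm_num)] at hu
      have : min (θ * u) 1 = θ * u := min_eq_left (by nlinarith [hu.1, hu.2])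
      rw [this]; ring
    rw [intervalIntegral.integral_congr hcong, intervalIntegral.integral_const_mul,
      integral_pow]
    ring
  have h3 : 3 * ∫ v in (0:ℝ)..1, (min (θ * 1) v) ^ 2 = 3 * θ ^ 2 - 2 * θ ^ 3 := by
    have hint : ∀ a b : ℝ, IntervalIntegrable (fun v => (min (θ * 1) v) ^ 2)
        MeasureTheory.volume a b := by
      intro a b
      exact ((continuous_const.min continuous_id).pow 2).intervalIntegrable a b
    have hsplit := intervalIntegral.integral_add_adjacent_intervals (a := (0:ℝ)) (b := θ)
      (c := 1) (hint 0 θ) (hint θ 1)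
    have e1 : ∫ v in (0:ℝ)..θ, (min (θ * 1) v) ^ 2 = θ ^ 3 / 3 := by
      have : ∀ v ∈ uIcc (0:ℝ) θ, (min (θ * 1) v) ^ 2 = v ^ 2 := by
        intro v hv
        rw [uIcc_of_le hθ0] at hv
        rw [min_eq_right (by linarith [hv.2])]
      rw [intervalIntegral.integral_congr this, integral_pow]
      norm_num
    have e2 : ∫ v in θ..(1:ℝ), (min (θ * 1) v) ^ 2 = θ ^ 2 * (1 - θ) := by
      have : ∀ v ∈ uIcc θ (1:ℝ), (min (θ * 1) v) ^ 2 = θ ^ 2 := by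
        intro v hv
        rw [uIcc_of_le hθ1] at hv
        rw [min_eq_left (by linarith [hv.1])]; ring
      rw [intervalIntegral.integral_congr this, intervalIntegral.integral_const, smul_eq_mul]
      ring
    rw [← hsplit, e1, e2]; ring
  refine ⟨?_, h2, h3, by rw [h2, h3]; ring⟩
  intro u hu v hv
  have key : ∀ t : ℝ, 2 ≤ t → t * survCopula (nelsenC θ) (u / t) (v / t) = min (θ * u) v := by
    intro t ht
    have ht0 : (0:ℝ) < t := by linarith
    have htne : t ≠ 0 := ne_of_gt ht0
    have hmax : max ((1 - u/t) + (1 - v/t) - 1) 0 = (1 - u/t) + (1 - v/t) - 1 := by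
      apply max_eq_left
      have hsum : u/t + v/t ≤ 1 := by
        rw [← add_div, div_le_one ht0]
        linarith [hu.2, hv.2]
      linarith
    have e : θ * (1 - v/t) + (1 - θ) * ((1 - u/t) + (1 - v/t) - 1)
        = 1 - u/t - v/t + (θ*u)/t := by field_simp; ring
    simp only [survCopula, nelsenC]
    rw [hmax, e]
    rcases le_total (θ * u) v with h | h
    · have hd : (θ*u)/t ≤ v/t := by gcongr
      rw [min_eq_right (by linarith), min_eq_left h]
      field_simp; ring
    · have hd : v/t ≤ (θ*u)/t := by gcongr
      rw [min_eq_left (by linarith), min_eq_right h]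
      field_simp; ring
  apply Tendsto.congr' _ tendsto_const_nhds
  filter_upwards [eventually_ge_atTop (2:ℝ)] with t ht
  exact (key t ht).symm
end
end

section
/- Fix δ ∈ [1,∞) and let C_δ(u,v) := exp( −[ (−log u)^δ + (−log v)^δ ]^{1/δ} ) be the Gumbel copula on (0,1]², with survival copula C̄_δ(x,y) := x + y − 1 + C_δ(1−x, 1−y). Then for every (u,v) ∈ [0,1]² (not both zero), lim_{t→∞} t·C̄_δ(u/t, v/t) = u + v − ( u^δ + v^δ )^{1/δ}; that is, the upper tail copula of the Gumbel copula is Λ_δ(u,v) = u + v − (u^δ + v^δ)^{1/δ}. -/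
open Filter Set Topology

noncomputable section

/-- The Gumbel copula `C_δ(u,v) = exp(−[(−log u)^δ + (−log v)^δ]^{1/δ})`. -/
def gumbelC (δ : ℝ) : ℝ → ℝ → ℝ :=
  fun u v => Real.exp (-(((-Real.log u) ^ δ + (-Real.log v) ^ δ) ^ (1 / δ)))

lemma aux_mul_neg_log (u : ℝ) :
    Tendsto (fun t : ℝ => t * (-Real.log (1 - u / t))) atTop (nhds u) := by
  have h := (Real.tendsto_mul_log_one_add_div_atTop (-u)).neg
  rw [neg_neg] at h
  refine h.congr fun t => ?_
  rw [neg_div, ← sub_eq_add_neg, mul_neg]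

/-- **Upper tail copula of the Gumbel copula.**
For `δ ≥ 1` and `(u,v) ∈ [0,1]²` not both zero,
`lim_{t→∞} t·C̄_δ(u/t, v/t) = u + v − (u^δ + v^δ)^{1/δ}`. -/
theorem gumbel_tailCopula (δ : ℝ) (hδ : 1 ≤ δ) (u v : ℝ)
    (hu : u ∈ Icc (0 : ℝ) 1) (hv : v ∈ Icc (0 : ℝ) 1) (huv : ¬(u = 0 ∧ v = 0)) :
    Tendsto (fun t : ℝ => t * survCopula (gumbelC δ) (u / t) (v / t)) atTop
      (nhds (u + v - (u ^ δ + v ^ δ) ^ (1 / δ))) := by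
  have hδ0 : 0 < δ := lt_of_lt_of_le one_pos hδ
  set fu : ℝ → ℝ := fun t => -Real.log (1 - u / t) with hfu
  set fv : ℝ → ℝ := fun t => -Real.log (1 - v / t) with hfv
  set g : ℝ → ℝ := fun t => (fu t ^ δ + fv t ^ δ) ^ (1 / δ) with hg
  set L : ℝ := (u ^ δ + v ^ δ) ^ (1 / δ) with hL
  -- eventually facts
  have hev : ∀ᶠ t : ℝ in atTop, 1 < t := eventually_gt_atTop 1
  have hfu_nonneg : ∀ t : ℝ, 1 < t → 0 ≤ fu t := by
    intro t ht
    have h1 : 1 - u / t ≤ 1 := by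
      have : 0 ≤ u / t := div_nonneg hu.1 (le_of_lt (lt_trans one_pos ht))
      linarith
    have h2 : 0 ≤ 1 - u / t := by
      have : u / t < 1 := (div_lt_one (lt_trans one_pos ht)).mpr (lt_of_le_of_lt hu.2 ht)
      linarith
    simp only [hfu, neg_nonneg]
    exact Real.log_nonpos h2 h1
  have hfv_nonneg : ∀ t : ℝ, 1 < t → 0 ≤ fv t := by
    intro t ht
    have h1 : 1 - v / t ≤ 1 := by
      have : 0 ≤ v / t := div_nonneg hv.1 (le_of_lt (lt_trans one_pos ht))
      linarith
    have h2 : 0 ≤ 1 - v / t := by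
      have : v / t < 1 := (div_lt_one (lt_trans one_pos ht)).mpr (lt_of_le_of_lt hv.2 ht)
      linarith
    simp only [hfv, neg_nonneg]
    exact Real.log_nonpos h2 h1
  -- g is eventually positive
  have hg_pos : ∀ᶠ t : ℝ in atTop, 0 < g t := by
    filter_upwards [hev] with t ht
    have ht0 : (0 : ℝ) < t := lt_trans one_pos ht
    have key : 0 < fu t ^ δ + fv t ^ δ := by
      rcases not_and_or.mp huv with h | h
      · have hu0 : 0 < u := lt_of_le_of_ne hu.1 (Ne.symm h)
        have hlt : u / t < 1 := (div_lt_one ht0).mpr (lt_of_le_of_lt hu.2 ht)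
        have hpos : 0 < 1 - u / t := by linarith
        have hlog : Real.log (1 - u / t) < 0 :=
          Real.log_neg hpos (by
            have : 0 < u / t := div_pos hu0 ht0
            linarith)
        have : 0 < fu t := by simpa [hfu] using neg_pos.mpr hlog
        have := Real.rpow_pos_of_pos this δ
        have h2 : 0 ≤ fv t ^ δ := Real.rpow_nonneg (hfv_nonneg t ht) δ
        linarith
      · have hv0 : 0 < v := lt_of_le_of_ne hv.1 (Ne.symm h)
        have hlt : v / t < 1 := (div_lt_one ht0).mpr (lt_of_le_of_lt hv.2 ht)
        have hpos : 0 < 1 - v / t := by linarith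
        have hlog : Real.log (1 - v / t) < 0 :=
          Real.log_neg hpos (by
            have : 0 < v / t := div_pos hv0 ht0
            linarith)
        have : 0 < fv t := by simpa [hfv] using neg_pos.mpr hlog
        have := Real.rpow_pos_of_pos this δ
        have h2 : 0 ≤ fu t ^ δ := Real.rpow_nonneg (hfu_nonneg t ht) δ
        linarith
    exact Real.rpow_pos_of_pos key (1 / δ)
  -- t * g t → L
  have hA : Tendsto (fun t : ℝ => t * fu t) atTop (nhds u) := aux_mul_neg_log u
  have hB : Tendsto (fun t : ℝ => t * fv t) atTop (nhds v) := aux_mul_neg_log v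
  have hAp : Tendsto (fun t : ℝ => (t * fu t) ^ δ) atTop (nhds (u ^ δ)) :=
    ((Real.continuousAt_rpow_const u δ (Or.inr hδ0.le)).tendsto).comp hA
  have hBp : Tendsto (fun t : ℝ => (t * fv t) ^ δ) atTop (nhds (v ^ δ)) :=
    ((Real.continuousAt_rpow_const v δ (Or.inr hδ0.le)).tendsto).comp hB
  have hTg : Tendsto (fun t : ℝ => t * g t) atTop (nhds L) := by
    have hsum := hAp.add hBp
    have houter :
        Tendsto (fun t : ℝ => ((t * fu t) ^ δ + (t * fv t) ^ δ) ^ (1 / δ)) atTop (nhds L) :=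
      ((Real.continuousAt_rpow_const _ (1 / δ) (Or.inr (by positivity : (0:ℝ) ≤ 1/δ))).tendsto).comp hsum
    refine houter.congr' ?_
    filter_upwards [hev] with t ht
    have ht0 : (0 : ℝ) ≤ t := le_of_lt (lt_trans one_pos ht)
    rw [Real.mul_rpow ht0 (hfu_nonneg t ht), Real.mul_rpow ht0 (hfv_nonneg t ht),
      ← mul_add, Real.mul_rpow (Real.rpow_nonneg ht0 δ)
        (add_nonneg (Real.rpow_nonneg (hfu_nonneg t ht) δ) (Real.rpow_nonneg (hfv_nonneg t ht) δ)),
      ← Real.rpow_mul ht0, mul_one_div_cancel (ne_of_gt hδ0), Real.rpow_one]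
  -- g → 0
  have hg0 : Tendsto g atTop (nhds 0) := by
    have := hTg.mul tendsto_inv_atTop_zero
    rw [mul_zero] at this
    refine this.congr' ?_
    filter_upwards [hev] with t ht
    field_simp
  -- -g → 0 within ≠ 0
  have hgne : Tendsto (fun t => -g t) atTop (𝓝[≠] (0 : ℝ)) := by
    refine tendsto_nhdsWithin_of_tendsto_nhds_of_eventually_within _ (by simpa using hg0.neg) ?_
    filter_upwards [hg_pos] with t ht
    simp [ne_of_lt (neg_neg_iff_pos.mpr ht)]
  -- slope limit
  have hslope : Tendsto (fun x : ℝ => (Real.exp x - 1) / x) (𝓝[≠] (0:ℝ)) (nhds 1) := by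
    have h := hasDerivAt_iff_tendsto_slope.mp (Real.hasDerivAt_exp 0)
    rw [Real.exp_zero] at h
    refine h.congr fun x => ?_
    simp [slope_fun_def, Real.exp_zero, div_eq_inv_mul]
  have hE : Tendsto (fun t : ℝ => (Real.exp (-g t) - 1) / (-g t)) atTop (nhds 1) :=
    hslope.comp hgne
  -- t * (exp(-g t) - 1) → -L
  have hMain : Tendsto (fun t : ℝ => t * (Real.exp (-g t) - 1)) atTop (nhds (-L)) := by
    have h := hTg.mul (hE.neg)
    rw [mul_neg, mul_one] at h
    refine h.congr' ?_
    filter_upwards [hg_pos] with t ht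
    have hne : g t ≠ 0 := ne_of_gt ht
    field_simp [hne]
  -- conclude
  have hfinal := (tendsto_const_nhds : Tendsto (fun _ : ℝ => u + v) atTop (nhds (u + v))).add hMain
  have : u + v + -L = u + v - L := by ring
  rw [this] at hfinal
  refine hfinal.congr' ?_
  filter_upwards [hev] with t ht
  have ht0 : t ≠ 0 := ne_of_gt (lt_trans one_pos ht)
  simp only [survCopula, gumbelC, hg, hfu, hfv]
  field_simp
  ring
end
end

section
/- Fix an integer m ≥ 2 and let C_m(u,v) := min(u, v^{1/m}) · v^{1−1/m} for (u,v) ∈ [0,1]², with survival copula C̄_m(x,y) := x + y − 1 + C_m(1−x, 1−y). Then for every (u,v) ∈ [0,1]², lim_{t→∞} t·C̄_m(u/t, v/t) = min(u, v/m); consequently the tail copula is Λ_m(u,v) = min(u, v/m), and the associated measures are η(X|Y) = 3∫₀¹ min(u, 1/m)² du = 3/m² − 2/m³, η(Y|X) = 3∫₀¹ min(1, v/m)² dv = 1/m², and Δ(X,Y) = η(X|Y) − η(Y|X) = (2/m²)(1 − 1/m). -/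
open Filter Set

noncomputable section

/-- The copula `C_m(u,v) = min(u, v^{1/m})·v^{1−1/m}` of the max-model example. -/
def maxC (m : ℕ) : ℝ → ℝ → ℝ :=
  fun u v => min u (v ^ ((1 : ℝ) / m)) * v ^ (1 - (1 : ℝ) / m)

/-- **Tail copula and ETA measures for the max-model copula.**
For an integer `m ≥ 2`: `lim_{t→∞} t·C̄_m(u/t, v/t) = min(u, v/m)` for all
`(u,v) ∈ [0,1]²`, so the tail copula is `Λ_m(u,v) = min(u, v/m)`, and
`η(X|Y) = 3∫₀¹ min(u,1/m)² du = 3/m² − 2/m³`, `η(Y|X) = 3∫₀¹ min(1,v/m)² dv = 1/m²`,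
and `Δ(X,Y) = η(X|Y) − η(Y|X) = (2/m²)(1 − 1/m)`. -/
theorem maxModel_tailCopula_eta (m : ℕ) (hm : 2 ≤ m) :
    (∀ u ∈ Icc (0 : ℝ) 1, ∀ v ∈ Icc (0 : ℝ) 1,
      Tendsto (fun t : ℝ => t * survCopula (maxC m) (u / t) (v / t)) atTop
        (nhds (min u (v / m)))) ∧
    (3 * ∫ u in (0:ℝ)..1, (min u (1 / (m : ℝ))) ^ 2 = 3 / (m : ℝ) ^ 2 - 2 / (m : ℝ) ^ 3) ∧
    (3 * ∫ v in (0:ℝ)..1, (min 1 (v / (m : ℝ))) ^ 2 = 1 / (m : ℝ) ^ 2) ∧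
    ((3 * ∫ u in (0:ℝ)..1, (min u (1 / (m : ℝ))) ^ 2) -
        (3 * ∫ v in (0:ℝ)..1, (min 1 (v / (m : ℝ))) ^ 2) =
      2 / (m : ℝ) ^ 2 * (1 - 1 / (m : ℝ))) := by
  have hm0 : (0:ℝ) < m := by
    have : (0:ℕ) < m := by omega
    exact_mod_cast this
  have hmne : (m:ℝ) ≠ 0 := ne_of_gt hm0
  have hm1 : (1:ℝ) ≤ m := by
    have : (1:ℕ) ≤ m := by omega
    exact_mod_cast this
  set α : ℝ := 1 - 1/m with hαdef
  have H1 : 3 * ∫ u in (0:ℝ)..1, (min u (1 / (m : ℝ))) ^ 2 = 3 / (m : ℝ) ^ 2 - 2 / (m : ℝ) ^ 3 := by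
    have hc0 : (0:ℝ) < 1 / m := by positivity
    have hc1 : (1:ℝ)/m ≤ 1 := by rw [div_le_one hm0]; exact hm1
    have hcont : Continuous fun u : ℝ => (min u (1/(m:ℝ)))^2 :=
      (continuous_id.min continuous_const).pow 2
    have hsplit : (∫ u in (0:ℝ)..(1/(m:ℝ)), (min u (1/(m:ℝ)))^2) +
          (∫ u in (1/(m:ℝ))..1, (min u (1/(m:ℝ)))^2)
        = ∫ u in (0:ℝ)..1, (min u (1/(m:ℝ)))^2 :=
      intervalIntegral.integral_add_adjacent_intervals
        (hcont.intervalIntegrable _ _) (hcont.intervalIntegrable _ _)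
    have e1 : ∫ u in (0:ℝ)..(1/(m:ℝ)), (min u (1/(m:ℝ)))^2
        = ∫ u in (0:ℝ)..(1/(m:ℝ)), u^2 := by
      apply intervalIntegral.integral_congr
      intro x hx
      rw [uIcc_of_le hc0.le] at hx
      simp only [min_eq_left hx.2]
    have e2 : ∫ u in (1/(m:ℝ))..1, (min u (1/(m:ℝ)))^2
        = ∫ u in (1/(m:ℝ))..1, (1/(m:ℝ))^2 := by
      apply intervalIntegral.integral_congr
      intro x hx
      rw [uIcc_of_le hc1] at hx
      simp only [min_eq_right hx.1]
    rw [← hsplit, e1, e2, integral_pow, intervalIntegral.integral_const]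
    simp only [smul_eq_mul]
    field_simp
    ring_nf
    rw [← mul_pow, mul_inv_cancel₀ hmne]
    ring
  have H2 : 3 * ∫ v in (0:ℝ)..1, (min 1 (v / (m : ℝ))) ^ 2 = 1 / (m : ℝ) ^ 2 := by
    have e3 : ∫ v in (0:ℝ)..1, (min 1 (v/(m:ℝ)))^2 = ∫ v in (0:ℝ)..1, (v/(m:ℝ))^2 := by
      apply intervalIntegral.integral_congr
      intro x hx
      rw [uIcc_of_le zero_le_one] at hx
      have : x / (m:ℝ) ≤ 1 := by
        rw [div_le_one hm0]; exact le_trans hx.2 hm1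
      simp only [min_eq_right this]
    rw [e3]
    simp only [div_pow, intervalIntegral.integral_div, integral_pow]
    field_simp
    ring
  refine ⟨?_, H1, H2, by rw [H1, H2]; ring⟩
  · intro u hu v hv
    -- derivative of g s = (1 - v*s)^α at 0
    have hf : HasDerivAt (fun s : ℝ => 1 - v * s) (-v) 0 := by
      simpa using ((hasDerivAt_id (0:ℝ)).const_mul v).const_sub 1
    have hg : HasDerivAt (fun s : ℝ => (1 - v * s) ^ α) (-v * α) 0 := by
      have := hf.rpow_const (p := α) (Or.inl (by norm_num))
      simpa [Real.one_rpow] using this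
    have hinv : Tendsto (fun t : ℝ => t⁻¹) atTop (nhdsWithin (0:ℝ) {(0:ℝ)}ᶜ) := by
      refine tendsto_nhdsWithin_of_tendsto_nhds_of_eventually_within _ tendsto_inv_atTop_zero ?_
      filter_upwards [eventually_gt_atTop (0:ℝ)] with t ht
      simp [ne_of_gt (inv_pos.mpr ht)]
    have hslope : Tendsto (fun t : ℝ => slope (fun s : ℝ => (1 - v * s) ^ α) 0 t⁻¹) atTop
        (nhds (-v * α)) := (hasDerivAt_iff_tendsto_slope.mp hg).comp hinv
    have hq : Tendsto (fun t : ℝ => (t - u) / t) atTop (nhds 1) := by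
      have h0 : Tendsto (fun t : ℝ => 1 - u / t) atTop (nhds (1 - 0)) :=
        tendsto_const_nhds.sub (tendsto_const_nhds.div_atTop tendsto_id)
      refine Tendsto.congr' ?_ (by simpa using h0)
      filter_upwards [eventually_gt_atTop (0:ℝ)] with t ht
      field_simp
    have hmain : Tendsto (fun t : ℝ => v + (t - u) * ((1 - v / t) ^ α - 1)) atTop
        (nhds (v / m)) := by
      have hprod : Tendsto (fun t : ℝ =>
          ((t - u) / t) * slope (fun s : ℝ => (1 - v * s) ^ α) 0 t⁻¹) atTop
          (nhds (1 * (-v * α))) := hq.mul hslope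
      have hadd : Tendsto (fun t : ℝ => v +
          ((t - u) / t) * slope (fun s : ℝ => (1 - v * s) ^ α) 0 t⁻¹) atTop
          (nhds (v + 1 * (-v * α))) := tendsto_const_nhds.add hprod
      have hval : v + 1 * (-v * α) = v / m := by
        rw [hαdef]; field_simp; ring
      rw [hval] at hadd
      refine Tendsto.congr' ?_ hadd
      filter_upwards [eventually_gt_atTop (0:ℝ)] with t ht
      have hts : t ≠ 0 := ne_of_gt ht
      simp only [slope_def_field, mul_zero, sub_zero, Real.one_rpow]
      rw [show v * t⁻¹ = v / t from (div_eq_mul_inv v t).symm]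
      generalize (1 - v / t) ^ α = X
      field_simp
      try ring
    have hfin : Tendsto (fun t : ℝ => min (v + (t - u) * ((1 - v / t) ^ α - 1)) u) atTop
        (nhds (min u (v / m))) := by
      rw [min_comm]
      exact hmain.min tendsto_const_nhds
    refine Tendsto.congr' ?_ hfin
    filter_upwards [eventually_gt_atTop (1:ℝ)] with t ht
    have ht0 : (0:ℝ) < t := lt_trans one_pos ht
    have hts : t ≠ 0 := ne_of_gt ht0
    have hb : (0:ℝ) < 1 - v / t := by
      have : v / t < 1 := (div_lt_one ht0).mpr (lt_of_le_of_lt hv.2 ht)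
      linarith
    have hB : (0:ℝ) ≤ (1 - v / t) ^ α := Real.rpow_nonneg hb.le _
    have hbb : (1 - v / t) ^ ((1:ℝ)/m) * (1 - v / t) ^ α = 1 - v / t := by
      rw [hαdef, ← Real.rpow_add hb]
      norm_num
    simp only [survCopula, maxC, ← hαdef]
    rw [min_mul_of_nonneg _ _ hB, hbb, mul_add, mul_min_of_nonneg _ _ ht0.le]
    have e1 : t * ((1 - u / t) * (1 - v / t) ^ α) = (t - u) * (1 - v / t) ^ α := by
      field_simp
    have e2 : t * (1 - v / t) = t - v := by field_simp
    have e3 : t * (u / t + v / t - 1) = u + v - t := by field_simp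
    rw [e1, e2, e3, ← min_add_add_left]
    congr 1 <;> ring
end
end

section
/- Let m ≥ 2 be an integer and let Z_1, …, Z_m be independent, identically distributed real-valued random variables with common cumulative distribution function F. Set X := Z_1 and Y := max(Z_1, …, Z_m). Then for all x, y ∈ ℝ, P(X ≤ x, Y ≤ y) = min( F(x), F(y) ) · F(y)^{m−1}; in particular, writing u = F(x) and v = F(y)^m, the joint distribution of (X,Y) has copula C_m(u,v) = min(u, v^{1/m}) v^{1−1/m}. -/
open MeasureTheory ProbabilityTheory Filter Set

noncomputable section

/-- **Joint distribution of `(Z_1, max(Z_1,…,Z_m))` for i.i.d. `Z_i`.**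
If `Z_1,…,Z_m` are i.i.d. with CDF `F`, `X = Z_1` and `Y = max(Z_1,…,Z_m)`, then
`P(X ≤ x, Y ≤ y) = min(F(x), F(y))·F(y)^{m−1}` for all `x, y ∈ ℝ`. -/
theorem maxModel_joint_cdf
    {Ω : Type*} [MeasurableSpace Ω] (P : Measure Ω) [IsProbabilityMeasure P]
    (m : ℕ) (hm : 2 ≤ m) (Z : Fin m → Ω → ℝ)
    (ν : Measure ℝ) [IsProbabilityMeasure ν]
    (hmeas : ∀ i, Measurable (Z i))
    (hdist : ∀ i, Measure.map (Z i) P = ν)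
    (hindep : iIndepFun Z P) :
    ∀ x y : ℝ,
      (P {ω | Z ⟨0, by omega⟩ ω ≤ x ∧
          Finset.univ.sup' ⟨⟨0, by omega⟩, Finset.mem_univ _⟩ (fun i => Z i ω) ≤ y}).toReal =
        min ((ν (Iic x)).toReal) ((ν (Iic y)).toReal) * ((ν (Iic y)).toReal) ^ (m - 1) := by
  intro x y
  set i0 : Fin m := ⟨0, by omega⟩
  set s : Fin m → Set Ω := fun i => Z i ⁻¹' Iic (if i = i0 then min x y else y) with hs
  have hset : {ω | Z i0 ω ≤ x ∧
      Finset.univ.sup' ⟨i0, Finset.mem_univ _⟩ (fun i => Z i ω) ≤ y} = ⋂ i, s i := by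
    ext ω
    simp only [mem_setOf_eq, Finset.sup'_le_iff (H := (⟨i0, Finset.mem_univ _⟩ : Finset.univ.Nonempty)), Finset.mem_univ, forall_true_left,
      mem_iInter, hs, mem_preimage, mem_Iic]
    constructor
    · rintro ⟨h1, h2⟩ i
      by_cases hi : i = i0 <;> simp [hi, le_min_iff, h1, h2 i, h2 i0]
    · intro h
      constructor
      · have := h i0; simp [le_min_iff] at this; exact this.1
      · intro i
        have := h i
        by_cases hi : i = i0
        · simp [hi, le_min_iff] at this ⊢; exact this.2
        · simpa [hi] using this
  have hval : ∀ i, P (s i) = ν (Iic (if i = i0 then min x y else y)) := by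
    intro i
    rw [hs, ← hdist i, Measure.map_apply (hmeas i) measurableSet_Iic]
  have hP : P (⋂ i, s i) = ∏ i, P (s i) := by
    refine hindep.meas_iInter fun i => ⟨Iic _, measurableSet_Iic, rfl⟩
  have hprod : ∏ i, P (s i) = ν (Iic (min x y)) * ν (Iic y) ^ (m - 1) := by
    rw [← Finset.mul_prod_erase Finset.univ _ (Finset.mem_univ i0)]
    rw [hval i0, if_pos rfl]
    congr 1
    rw [Finset.prod_congr rfl (fun i hi => by
      rw [hval i, if_neg (Finset.ne_of_mem_erase hi)]), Finset.prod_const]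
    congr 1
    rw [Finset.card_erase_of_mem (Finset.mem_univ i0), Finset.card_univ, Fintype.card_fin]
  have hmin : (ν (Iic (min x y))).toReal = min ((ν (Iic x)).toReal) ((ν (Iic y)).toReal) := by
    have hmono : ∀ a b : ℝ, a ≤ b → (ν (Iic a)).toReal ≤ (ν (Iic b)).toReal := fun a b hab =>
      ENNReal.toReal_mono (measure_ne_top ν _) (measure_mono (Iic_subset_Iic.2 hab))
    rcases le_total x y with h | h
    · rw [min_eq_left h, min_eq_left (hmono _ _ h)]
    · rw [min_eq_right h, min_eq_right (hmono _ _ h)]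
  rw [hset, hP, hprod, ENNReal.toReal_mul, ENNReal.toReal_pow, hmin]
end
end

section
/- Let Λ : [0,1]² → ℝ be bounded and measurable, let (t_m) be a sequence of nonzero real numbers with t_m → 0, let h : [0,1]² → ℝ be continuous, and let (h_m) be a sequence of measurable functions on [0,1]² with sup_{(u,v)∈[0,1]²} |h_m(u,v) − h(u,v)| → 0 as m → ∞. Define ψ(f) := 3∫₀¹ f(u,1)² du − 3∫₀¹ f(1,v)² dv. Then ( ψ(Λ + t_m h_m) − ψ(Λ) ) / t_m → 6 ∫₀¹ [ Λ(u,1) h(u,1) − Λ(1,u) h(1,u) ] du as m → ∞. (This identifies the Hadamard derivative of the asymmetry functional ψ at Λ, tangentially to the continuous functions.) -/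
open Filter Set MeasureTheory intervalIntegral

noncomputable section

/-- The asymmetry functional `ψ(f) = 3∫₀¹ f(u,1)² du − 3∫₀¹ f(1,v)² dv`. -/
def psiF (f : ℝ × ℝ → ℝ) : ℝ :=
  (3 * ∫ u in (0:ℝ)..1, (f (u, 1)) ^ 2) - 3 * ∫ v in (0:ℝ)..1, (f (1, v)) ^ 2

lemma ii_of_bound (f : ℝ → ℝ)
    (hf : AEStronglyMeasurable f (volume.restrict (Ioc (0:ℝ) 1)))
    (B : ℝ) (hB : ∀ u ∈ Ioc (0:ℝ) 1, |f u| ≤ B) :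
    IntervalIntegrable f volume 0 1 := by
  rw [intervalIntegrable_iff_integrableOn_Ioc_of_le (by norm_num : (0:ℝ) ≤ 1)]
  refine Integrable.mono' (integrable_const B) hf ?_
  rw [ae_restrict_iff' measurableSet_Ioc]
  filter_upwards with x hx
  simpa [Real.norm_eq_abs] using hB x hx

lemma slice_est (f g k : ℝ → ℝ) (hf : Measurable f)
    (hg : AEStronglyMeasurable g (volume.restrict (Ioc (0:ℝ) 1)))
    (hk : ContinuousOn k (Icc (0:ℝ) 1))
    (M D C ε s : ℝ) (hM : 0 ≤ M) (hsne : s ≠ 0)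
    (hfb : ∀ u, |f u| ≤ M)
    (hgb : ∀ u ∈ Icc (0:ℝ) 1, |g u| ≤ D)
    (hkb : ∀ u ∈ Icc (0:ℝ) 1, |k u| ≤ C)
    (hgk : ∀ u ∈ Icc (0:ℝ) 1, |g u - k u| ≤ ε) :
    |((∫ u in (0:ℝ)..1, (f u + s * g u)^2) - ∫ u in (0:ℝ)..1, (f u)^2) / s
      - 2 * ∫ u in (0:ℝ)..1, f u * k u| ≤ 2*M*ε + |s| *D^2 := by
  have hsub : Ioc (0:ℝ) 1 ⊆ Icc 0 1 := Ioc_subset_Icc_self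
  have hD : 0 ≤ D := le_trans (abs_nonneg _) (hgb 1 ⟨zero_le_one, le_refl 1⟩)
  have hfm : AEStronglyMeasurable f (volume.restrict (Ioc (0:ℝ) 1)) := hf.aestronglyMeasurable
  have hkm : AEStronglyMeasurable k (volume.restrict (Ioc (0:ℝ) 1)) :=
    (hk.aestronglyMeasurable measurableSet_Icc).mono_measure
      (Measure.restrict_mono hsub le_rfl)
  have i1 : IntervalIntegrable (fun u => (f u)^2) volume 0 1 := by
    refine ii_of_bound _ (hfm.pow 2) (M^2) (fun u _ => ?_)
    rw [abs_pow]; exact pow_le_pow_left₀ (abs_nonneg _) (hfb u) 2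
  have i2 : IntervalIntegrable (fun u => (f u + s * g u)^2) volume 0 1 := by
    refine ii_of_bound _ ((hfm.add (aestronglyMeasurable_const.mul hg)).pow 2)
      ((M + |s| *D)^2) (fun u hu => ?_)
    rw [abs_pow]
    refine pow_le_pow_left₀ (abs_nonneg _) ?_ 2
    calc |f u + s * g u| ≤ |f u| + |s * g u| := abs_add_le _ _
      _ ≤ M + |s| * D := by
          rw [abs_mul]
          exact add_le_add (hfb u) (mul_le_mul_of_nonneg_left (hgb u (hsub hu)) (abs_nonneg s))
  have iX : IntervalIntegrable (fun u => 2 * f u * g u + s * (g u)^2) volume 0 1 := by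
    refine ii_of_bound _ (((aestronglyMeasurable_const.mul hfm).mul hg).add
      (aestronglyMeasurable_const.mul (hg.pow 2))) (2*M*D + |s| *D^2) (fun u hu => ?_)
    have h1 : |2 * f u * g u| ≤ 2*M*D := by
      rw [abs_mul, abs_mul, abs_two]
      exact mul_le_mul (mul_le_mul_of_nonneg_left (hfb u) (by norm_num))
        (hgb u (hsub hu)) (abs_nonneg _) (by positivity)
    have h2 : |s * (g u)^2| ≤ |s| * D^2 := by
      rw [abs_mul, abs_pow]
      exact mul_le_mul_of_nonneg_left (pow_le_pow_left₀ (abs_nonneg _) (hgb u (hsub hu)) 2)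
        (abs_nonneg s)
    calc |2 * f u * g u + s * (g u)^2| ≤ |2 * f u * g u| + |s * (g u)^2| := abs_add_le _ _
      _ ≤ 2*M*D + |s| *D^2 := add_le_add h1 h2
  have hC : 0 ≤ C := le_trans (abs_nonneg _) (hkb 1 ⟨zero_le_one, le_refl 1⟩)
  have iY : IntervalIntegrable (fun u => 2 * (f u * k u)) volume 0 1 := by
    refine ii_of_bound _ (aestronglyMeasurable_const.mul (hfm.mul hkm)) (2*(M*C))
      (fun u hu => ?_)
    rw [abs_mul, abs_two, abs_mul]
    exact mul_le_mul_of_nonneg_left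
      (mul_le_mul (hfb u) (hkb u (hsub hu)) (abs_nonneg _) hM) (by norm_num)
  have key : ((∫ u in (0:ℝ)..1, (f u + s * g u)^2) - ∫ u in (0:ℝ)..1, (f u)^2) / s
      = ∫ u in (0:ℝ)..1, (2 * f u * g u + s * (g u)^2) := by
    rw [← integral_sub i2 i1]
    have : (∫ u in (0:ℝ)..1, ((f u + s * g u)^2 - (f u)^2))
        = ∫ u in (0:ℝ)..1, s * (2 * f u * g u + s * (g u)^2) := by
      apply integral_congr
      intro u _
      ring
    rw [this, intervalIntegral.integral_const_mul, mul_div_cancel_left₀ _ hsne]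
  rw [key]
  have h2J : 2 * (∫ u in (0:ℝ)..1, f u * k u) = ∫ u in (0:ℝ)..1, 2 * (f u * k u) := by
    rw [intervalIntegral.integral_const_mul]
  rw [h2J, ← integral_sub iX iY]
  have := intervalIntegral.norm_integral_le_of_norm_le_const
    (a := (0:ℝ)) (b := 1) (C := 2*M*ε + |s| *D^2)
    (f := fun u => (2 * f u * g u + s * (g u)^2) - 2 * (f u * k u)) ?_
  · simpa [Real.norm_eq_abs] using this
  · intro x hx
    rw [uIoc_of_le (by norm_num : (0:ℝ) ≤ 1)] at hx
    have hx' := hsub hx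
    have h1 : |f x * (g x - k x)| ≤ M * ε := by
      rw [abs_mul]
      exact mul_le_mul (hfb x) (hgk x hx') (abs_nonneg _) hM
    have h2 : |s * (g x)^2| ≤ |s| * D^2 := by
      rw [abs_mul, abs_pow]
      exact mul_le_mul_of_nonneg_left (pow_le_pow_left₀ (abs_nonneg _) (hgb x hx') 2)
        (abs_nonneg s)
    have heq : (2 * f x * g x + s * (g x)^2) - 2 * (f x * k x)
        = 2 * (f x * (g x - k x)) + s * (g x)^2 := by ring
    rw [Real.norm_eq_abs]
    show |2 * f x * g x + s * (g x)^2 - 2 * (f x * k x)| ≤ _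
    rw [heq]
    calc |2 * (f x * (g x - k x)) + s * (g x)^2|
        ≤ |2 * (f x * (g x - k x))| + |s * (g x)^2| := abs_add_le _ _
      _ ≤ 2*(M*ε) + |s| *D^2 := by
          rw [abs_mul, abs_two]
          exact add_le_add (mul_le_mul_of_nonneg_left h1 (by norm_num)) h2
      _ = 2*M*ε + |s| *D^2 := by ring

/-- **Hadamard differentiability of the asymmetry functional `ψ`.**
If `Λ` is bounded and measurable on `[0,1]²`, `t_m ≠ 0` with `t_m → 0`, `h` is continuous
on `[0,1]²`, and `h_m` are measurable with `h_m → h` uniformly on `[0,1]²`, then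
`(ψ(Λ + t_m h_m) − ψ(Λ))/t_m → 6∫₀¹ [Λ(u,1)h(u,1) − Λ(1,u)h(1,u)] du`. -/
theorem hadamard_derivative_psi (Λ : ℝ × ℝ → ℝ) (hΛmeas : Measurable Λ)
    (M : ℝ) (hΛbd : ∀ p, |Λ p| ≤ M)
    (t : ℕ → ℝ) (ht0 : ∀ m, t m ≠ 0) (ht : Tendsto t atTop (nhds 0))
    (h : ℝ × ℝ → ℝ) (hcont : ContinuousOn h (Icc (0 : ℝ) 1 ×ˢ Icc (0 : ℝ) 1))
    (hs : ℕ → ℝ × ℝ → ℝ) (hsmeas : ∀ m, Measurable (hs m))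
    (hunif : TendstoUniformlyOn hs h atTop (Icc (0 : ℝ) 1 ×ˢ Icc (0 : ℝ) 1)) :
    Tendsto
      (fun m => (psiF (fun p => Λ p + t m * hs m p) - psiF Λ) / t m)
      atTop
      (nhds (6 * ∫ u in (0:ℝ)..1, (Λ (u, 1) * h (u, 1) - Λ (1, u) * h (1, u)))) := by
  have hKcomp : IsCompact (Icc (0 : ℝ) 1 ×ˢ Icc (0 : ℝ) 1) :=
    (isCompact_Icc).prod isCompact_Icc
  obtain ⟨C, hC⟩ := hKcomp.exists_bound_of_continuousOn hcont
  have hC' : ∀ p ∈ Icc (0 : ℝ) 1 ×ˢ Icc (0 : ℝ) 1, |h p| ≤ C :=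
    fun p hp => by simpa [Real.norm_eq_abs] using hC p hp
  have hM : 0 ≤ M := le_trans (abs_nonneg _) (hΛbd (0, 0))
  have mem1 : ∀ u ∈ Icc (0:ℝ) 1, ((u, (1:ℝ)) : ℝ × ℝ) ∈ Icc (0 : ℝ) 1 ×ˢ Icc (0 : ℝ) 1 :=
    fun u hu => ⟨hu, ⟨zero_le_one, le_refl 1⟩⟩
  have mem2 : ∀ v ∈ Icc (0:ℝ) 1, (((1:ℝ), v) : ℝ × ℝ) ∈ Icc (0 : ℝ) 1 ×ˢ Icc (0 : ℝ) 1 :=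
    fun v hv => ⟨⟨zero_le_one, le_refl 1⟩, hv⟩
  have hCn : 0 ≤ C := le_trans (abs_nonneg _) (hC' (0, 1) (mem1 0 ⟨le_refl 0, zero_le_one⟩))
  have hf₁m : Measurable (fun u : ℝ => Λ (u, 1)) :=
    hΛmeas.comp (measurable_id.prodMk measurable_const)
  have hf₂m : Measurable (fun v : ℝ => Λ (1, v)) :=
    hΛmeas.comp (measurable_const.prodMk measurable_id)
  have hk₁c : ContinuousOn (fun u : ℝ => h (u, 1)) (Icc (0:ℝ) 1) :=
    hcont.comp ((continuous_id.prodMk continuous_const).continuousOn) mem1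
  have hk₂c : ContinuousOn (fun v : ℝ => h (1, v)) (Icc (0:ℝ) 1) :=
    hcont.comp ((continuous_const.prodMk continuous_id).continuousOn) mem2
  have hsub : Ioc (0:ℝ) 1 ⊆ Icc 0 1 := Ioc_subset_Icc_self
  have hk₁m : AEStronglyMeasurable (fun u : ℝ => h (u, 1)) (volume.restrict (Ioc (0:ℝ) 1)) :=
    (hk₁c.aestronglyMeasurable measurableSet_Icc).mono_measure
      (Measure.restrict_mono hsub le_rfl)
  have hk₂m : AEStronglyMeasurable (fun v : ℝ => h (1, v)) (volume.restrict (Ioc (0:ℝ) 1)) :=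
    (hk₂c.aestronglyMeasurable measurableSet_Icc).mono_measure
      (Measure.restrict_mono hsub le_rfl)
  -- split the target integral
  have iT1 : IntervalIntegrable (fun u : ℝ => Λ (u, 1) * h (u, 1)) volume 0 1 := by
    refine ii_of_bound _ (hf₁m.aestronglyMeasurable.mul hk₁m) (M * C) (fun u hu => ?_)
    rw [abs_mul]
    exact mul_le_mul (hΛbd _) (hC' _ (mem1 u (hsub hu))) (abs_nonneg _) hM
  have iT2 : IntervalIntegrable (fun v : ℝ => Λ (1, v) * h (1, v)) volume 0 1 := by
    refine ii_of_bound _ (hf₂m.aestronglyMeasurable.mul hk₂m) (M * C) (fun v hv => ?_)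
    rw [abs_mul]
    exact mul_le_mul (hΛbd _) (hC' _ (mem2 v (hsub hv))) (abs_nonneg _) hM
  have htarget : (∫ u in (0:ℝ)..1, (Λ (u, 1) * h (u, 1) - Λ (1, u) * h (1, u)))
      = (∫ u in (0:ℝ)..1, Λ (u, 1) * h (u, 1)) - ∫ v in (0:ℝ)..1, Λ (1, v) * h (1, v) :=
    intervalIntegral.integral_sub iT1 iT2
  rw [Metric.tendsto_nhds]
  intro δ hδ
  set D : ℝ := C + 1 with hD
  set E : ℝ := 12 * M + 6 * D ^ 2 + 1 with hE
  have hEpos : 0 < E := by positivity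
  set ε : ℝ := δ / E with hε
  have hεpos : 0 < ε := div_pos hδ hEpos
  have ev1 := Metric.tendstoUniformlyOn_iff.1 hunif ε hεpos
  have ev2 := Metric.tendstoUniformlyOn_iff.1 hunif 1 one_pos
  have ev3 : ∀ᶠ m in atTop, |t m| < ε := by
    have := Metric.tendsto_nhds.1 ht ε hεpos
    simpa [Real.dist_eq] using this
  filter_upwards [ev1, ev2, ev3] with m h1 h2 h3
  -- bounds on the perturbations
  have hg₁m : AEStronglyMeasurable (fun u : ℝ => hs m (u, 1)) (volume.restrict (Ioc (0:ℝ) 1)) :=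
    ((hsmeas m).comp (measurable_id.prodMk measurable_const)).aestronglyMeasurable
  have hg₂m : AEStronglyMeasurable (fun v : ℝ => hs m (1, v)) (volume.restrict (Ioc (0:ℝ) 1)) :=
    ((hsmeas m).comp (measurable_const.prodMk measurable_id)).aestronglyMeasurable
  have hsD : ∀ p ∈ Icc (0 : ℝ) 1 ×ˢ Icc (0 : ℝ) 1, |hs m p| ≤ D := by
    intro p hp
    have hd := h2 p hp
    rw [Real.dist_eq] at hd
    have h5 : |hs m p| - |h p| ≤ |hs m p - h p| := abs_sub_abs_le_abs_sub _ _
    rw [abs_sub_comm] at h5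
    have := hC' p hp
    rw [hD]; linarith
  have hsε : ∀ p ∈ Icc (0 : ℝ) 1 ×ˢ Icc (0 : ℝ) 1, |hs m p - h p| ≤ ε := by
    intro p hp
    have hd := h1 p hp
    rw [Real.dist_eq, abs_sub_comm] at hd
    exact le_of_lt hd
  -- the two slice estimates
  have est1 := slice_est (fun u : ℝ => Λ (u, 1)) (fun u : ℝ => hs m (u, 1))
    (fun u : ℝ => h (u, 1)) hf₁m hg₁m hk₁c M D C ε (t m) hM (ht0 m)
    (fun u => hΛbd _) (fun u hu => hsD _ (mem1 u hu)) (fun u hu => hC' _ (mem1 u hu))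
    (fun u hu => hsε _ (mem1 u hu))
  have est2 := slice_est (fun v : ℝ => Λ (1, v)) (fun v : ℝ => hs m (1, v))
    (fun v : ℝ => h (1, v)) hf₂m hg₂m hk₂c M D C ε (t m) hM (ht0 m)
    (fun v => hΛbd _) (fun v hv => hsD _ (mem2 v hv)) (fun v hv => hC' _ (mem2 v hv))
    (fun v hv => hsε _ (mem2 v hv))
  -- rewrite the difference quotient
  have hquot : (psiF (fun p => Λ p + t m * hs m p) - psiF Λ) / t m
      = 3 * (((∫ u in (0:ℝ)..1, (Λ (u, 1) + t m * hs m (u, 1))^2)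
            - ∫ u in (0:ℝ)..1, (Λ (u, 1))^2) / t m)
        - 3 * (((∫ v in (0:ℝ)..1, (Λ (1, v) + t m * hs m (1, v))^2)
            - ∫ v in (0:ℝ)..1, (Λ (1, v))^2) / t m) := by
    simp only [psiF]
    field_simp
    ring
  rw [Real.dist_eq, hquot, htarget]
  set A₁ := ((∫ u in (0:ℝ)..1, (Λ (u, 1) + t m * hs m (u, 1))^2)
      - ∫ u in (0:ℝ)..1, (Λ (u, 1))^2) / t m with hA₁
  set A₂ := ((∫ v in (0:ℝ)..1, (Λ (1, v) + t m * hs m (1, v))^2)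
      - ∫ v in (0:ℝ)..1, (Λ (1, v))^2) / t m with hA₂
  set J₁ := ∫ u in (0:ℝ)..1, Λ (u, 1) * h (u, 1) with hJ₁
  set J₂ := ∫ v in (0:ℝ)..1, Λ (1, v) * h (1, v) with hJ₂
  have h4 : |3 * A₁ - 3 * A₂ - 6 * (J₁ - J₂)|
      ≤ 3 * |A₁ - 2 * J₁| + 3 * |A₂ - 2 * J₂| := by
    rw [show 3 * A₁ - 3 * A₂ - 6 * (J₁ - J₂)
        = 3 * (A₁ - 2 * J₁) + (-(3 * (A₂ - 2 * J₂))) from by ring]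
    calc |3 * (A₁ - 2 * J₁) + (-(3 * (A₂ - 2 * J₂)))|
        ≤ |3 * (A₁ - 2 * J₁)| + |(-(3 * (A₂ - 2 * J₂)))| := abs_add_le _ _
      _ = 3 * |A₁ - 2 * J₁| + 3 * |A₂ - 2 * J₂| := by
          rw [abs_neg, abs_mul, abs_mul]; norm_num
  have hDsq : (0:ℝ) ≤ D ^ 2 := sq_nonneg D
  have hEε : E * ε = δ := by
    rw [hε]; field_simp
  have hts : |t m| * D ^ 2 ≤ ε * D ^ 2 :=
    mul_le_mul_of_nonneg_right (le_of_lt h3) hDsq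
  nlinarith [est1, est2, hεpos, hM, hDsq]
end
end
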